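/- arXiv:0810.1354 — 5 statements merged into one kernel-verified Lean document; each statement's English description precedes it below -/
import Mathlib

section
/- For every n ≥ 1, γ − (∑_{k=1}^n 1/k − ln(n+1)) lies between 1/(2(n+1)) and 1/(n+1); in particular the partial sums approximate γ with error at most 1/(n+1) and at least 1/(2(n+1)). -/
open Real Filter

private lemma log_le_half_sub (t : ℝ) (ht : 1 ≤ t) :
    Real.log t ≤ (t - 1/t) / 2 := by
  have h0 : (0:ℝ) < t := lt_of_lt_of_le one_pos ht
  have hl : 0 ≤ Real.log t := Real.log_nonneg ht
  have := (Real.self_le_sinh_iff (x := Real.log t)).2 hl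
  rwa [Real.sinh_eq, Real.exp_log h0, Real.exp_neg, Real.exp_log h0,
    ← one_div] at this

private lemma seq_step (k : ℕ) :
    Real.eulerMascheroniSeq k + 1 / (2 * (k + 1 : ℝ)) ≤
    Real.eulerMascheroniSeq (k + 1) + 1 / (2 * (k + 2 : ℝ)) := by
  have hk1 : (0:ℝ) < (k:ℝ) + 1 := by positivity
  have hk2 : (0:ℝ) < (k:ℝ) + 2 := by positivity
  have hseq : Real.eulerMascheroniSeq (k + 1) - Real.eulerMascheroniSeq k
      = 1 / ((k:ℝ) + 1) - Real.log (((k:ℝ) + 2) / ((k:ℝ) + 1)) := by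
    simp only [Real.eulerMascheroniSeq, harmonic_succ]
    push_cast
    rw [Real.log_div (by positivity) (by positivity)]
    ring
  have hlog := log_le_half_sub (((k:ℝ) + 2) / ((k:ℝ) + 1))
    (by rw [le_div_iff₀ hk1]; linarith)
  have heq : (((k:ℝ) + 2) / ((k:ℝ) + 1) - 1 / (((k:ℝ) + 2) / ((k:ℝ) + 1))) / 2
      = 1 / ((k:ℝ) + 1) - (1 / (2 * ((k:ℝ) + 1)) - 1 / (2 * ((k:ℝ) + 2))) := by
    field_simp
    ring
  rw [heq] at hlog
  linarith [hlog, hseq]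

private lemma lower_aux (n : ℕ) :
    Real.eulerMascheroniSeq n + 1 / (2 * (n + 1 : ℝ)) ≤ Real.eulerMascheroniConstant := by
  have hmono : Monotone (fun k : ℕ => Real.eulerMascheroniSeq k + 1 / (2 * (k + 1 : ℝ))) := by
    apply monotone_nat_of_le_succ
    intro k
    have := seq_step k
    push_cast at this ⊢
    convert this using 3
    · rfl
    · ring
  have htend : Tendsto (fun k : ℕ => Real.eulerMascheroniSeq k + 1 / (2 * (k + 1 : ℝ)))
      atTop (nhds Real.eulerMascheroniConstant) := by
    have h1 := Real.tendsto_eulerMascheroniSeq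
    have h2 : Tendsto (fun k : ℕ => 1 / (2 * (k + 1 : ℝ))) atTop (nhds 0) := by
      have h3 := tendsto_one_div_add_atTop_nhds_zero_nat.const_mul (1/2 : ℝ)
      rw [mul_zero] at h3
      convert h3 using 2 with k
      have hk : ((k:ℝ) + 1) ≠ 0 := by positivity
      field_simp
    simpa using h1.add h2
  exact hmono.ge_of_tendsto htend n

theorem gamma_sub_partial_bounds (n : ℕ) (hn : 1 ≤ n) :
    1 / (2 * (n + 1 : ℝ)) ≤
      Real.eulerMascheroniConstant - ((∑ k ∈ Finset.Icc 1 n, (1 : ℝ) / k) - Real.log (n + 1)) ∧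
    Real.eulerMascheroniConstant - ((∑ k ∈ Finset.Icc 1 n, (1 : ℝ) / k) - Real.log (n + 1)) ≤
      1 / (n + 1 : ℝ) := by
  have hsum : (∑ k ∈ Finset.Icc 1 n, (1 : ℝ) / k) = (harmonic n : ℝ) := by
    rw [harmonic_eq_sum_Icc, Rat.cast_sum]
    simp [one_div]
  have hseq : Real.eulerMascheroniSeq n =
      (∑ k ∈ Finset.Icc 1 n, (1 : ℝ) / k) - Real.log (n + 1) := by
    rw [Real.eulerMascheroniSeq, hsum]
  constructor
  · have := lower_aux n
    rw [hseq] at this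
    linarith
  · have h := Real.eulerMascheroniConstant_lt_eulerMascheroniSeq' (n + 1)
    have hs' : Real.eulerMascheroniSeq' (n + 1) =
        Real.eulerMascheroniSeq n + 1 / ((n:ℝ) + 1) := by
      rw [Real.eulerMascheroniSeq', if_neg (Nat.succ_ne_zero n), harmonic_succ,
        Real.eulerMascheroniSeq]
      push_cast
      ring
    rw [hs', hseq] at h
    linarith
end

section
/- With b_n = ∑_{k=1}^{n-1} 1/k − ∑_{k=n+1}^{n²} 1/k, the quantity n²·(γ − b_n) converges to 2/3 as n → ∞. -/
open Filter Real Finset Topology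

set_option maxHeartbeats 1000000

namespace GammaAux


noncomputable def phi (x : ℝ) : ℝ := 1 / (2 * x) + 1 / (12 * x ^ 2)

noncomputable def H (n : ℕ) : ℝ := ∑ k ∈ Finset.Icc 1 n, (1 : ℝ) / k

noncomputable def T (n : ℕ) : ℝ :=
  Real.eulerMascheroniConstant - H n + Real.log (n + 1)

lemma H_eq (n : ℕ) : ((harmonic n : ℚ) : ℝ) = H n := by
  rw [harmonic_eq_sum_Icc, H]
  push_cast
  simp [one_div]

lemma logb (x : ℝ) (hx : 2 ≤ x) (k : ℕ) :
    |(∑ i ∈ Finset.range k, (-(1/x)) ^ (i + 1) / ((i : ℝ) + 1)) + Real.log (1 + 1/x)|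
      ≤ 2 / x ^ (k + 1) := by
  have hx0 : (0:ℝ) < x := by linarith
  have h1x : 1/x ≤ 1/2 := by rw [div_le_div_iff₀ hx0 two_pos]; linarith
  have h1x0 : (0:ℝ) < 1/x := by positivity
  have hlt : |(-(1/x))| < 1 := by rw [abs_neg, abs_of_pos h1x0]; linarith
  have key := Real.abs_log_sub_add_sum_range_le hlt k
  rw [abs_neg, abs_of_pos h1x0] at key
  rw [show (1:ℝ) - (-(1/x)) = 1 + 1/x by ring] at key
  refine key.trans ?_
  have hxp : (0:ℝ) < x ^ (k+1) := by positivity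
  have h2 : (1:ℝ)/2 ≤ 1 - 1/x := by linarith
  rw [div_pow, one_pow, div_div, div_le_div_iff₀ (mul_pos hxp (by linarith)) hxp]
  nlinarith [mul_le_mul_of_nonneg_left h2 hxp.le]

lemma logb1 (x : ℝ) (hx : 2 ≤ x) : |Real.log (1 + 1/x) - 1/x| ≤ 2 / x ^ 2 := by
  have := logb x hx 1
  rw [show (∑ i ∈ Finset.range 1, (-(1/x)) ^ (i + 1) / ((i : ℝ) + 1)) = -(1/x) by
    simp] at this
  rw [show -(1/x) + Real.log (1 + 1/x) = Real.log (1 + 1/x) - 1/x by ring] at this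
  exact this

lemma logb2 (x : ℝ) (hx : 2 ≤ x) :
    |Real.log (1 + 1/x) - (1/x - 1/(2*x^2))| ≤ 2 / x ^ 3 := by
  have := logb x hx 2
  rw [show (∑ i ∈ Finset.range 2, (-(1/x)) ^ (i + 1) / ((i : ℝ) + 1))
      = -(1/x - 1/(2*x^2)) by norm_num [Finset.sum_range_succ]; ring] at this
  rw [show -(1/x - 1/(2*x^2)) + Real.log (1 + 1/x)
      = Real.log (1 + 1/x) - (1/x - 1/(2*x^2)) by ring] at this
  exact this

lemma logb3 (x : ℝ) (hx : 2 ≤ x) :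
    |Real.log (1 + 1/x) - (1/x - 1/(2*x^2) + 1/(3*x^3))| ≤ 2 / x ^ 4 := by
  have := logb x hx 3
  rw [show (∑ i ∈ Finset.range 3, (-(1/x)) ^ (i + 1) / ((i : ℝ) + 1))
      = -(1/x - 1/(2*x^2) + 1/(3*x^3)) by norm_num [Finset.sum_range_succ]; ring] at this
  rw [show -(1/x - 1/(2*x^2) + 1/(3*x^3)) + Real.log (1 + 1/x)
      = Real.log (1 + 1/x) - (1/x - 1/(2*x^2) + 1/(3*x^3)) by ring] at this
  exact this

lemma ratb (x : ℝ) (hx : 2 ≤ x) :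
    |(1/(2*x^2) - 1/(3*x^3)) - (phi x - phi (x+1))| ≤ 1 / x ^ 4 := by
  have hx0 : (0:ℝ) < x := by linarith
  have hx1 : (0:ℝ) < x + 1 := by linarith
  have heq : (1/(2*x^2) - 1/(3*x^3)) - (phi x - phi (x+1))
      = -((3*x+4) / (12 * x^3 * (x+1)^2)) := by
    unfold phi; field_simp; ring
  rw [heq, abs_neg, abs_of_pos (by positivity)]
  rw [div_le_div_iff₀ (by positivity) (by positivity)]
  have hxx : x*(3*x+4) ≤ 12*(x+1)^2 := by nlinarith
  nlinarith [mul_le_mul_of_nonneg_left hxx (pow_pos hx0 3).le]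

lemma pt_bound (x : ℝ) (hx : 2 ≤ x) :
    |1/x - Real.log (1 + 1/x) - (phi x - phi (x+1))| ≤ 3 / x ^ 4 := by
  have h1 := logb3 x hx
  have h2 := ratb x hx
  have hsplit : 1/x - Real.log (1 + 1/x) - (phi x - phi (x+1))
      = -(Real.log (1 + 1/x) - (1/x - 1/(2*x^2) + 1/(3*x^3)))
        + ((1/(2*x^2) - 1/(3*x^3)) - (phi x - phi (x+1))) := by ring
  rw [hsplit]
  calc |_ + _| ≤ |-(Real.log (1 + 1/x) - (1/x - 1/(2*x^2) + 1/(3*x^3)))|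
        + |(1/(2*x^2) - 1/(3*x^3)) - (phi x - phi (x+1))| := abs_add_le _ _
    _ ≤ 2 / x ^ 4 + 1 / x ^ 4 := by rw [abs_neg]; exact add_le_add h1 h2
    _ = 3 / x ^ 4 := by ring





lemma sum_est (n : ℕ) (hn : 2 ≤ n) :
    ∀ m : ℕ, n ≤ m →
      |(H m - Real.log (m + 1)) - (H n - Real.log (n + 1))
        - (phi (n + 1) - phi (m + 1))| ≤ 3 / (n:ℝ)^2 * (1/n - 1/m) := by
  intro m hm
  induction m, hm using Nat.le_induction with
  | base => simp
  | succ m hm ih =>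
    have hn0 : (0:ℝ) < n := by positivity
    have hm0 : (0:ℝ) < m := by
      have : 0 < m := lt_of_lt_of_le (by omega) hm
      exact_mod_cast this
    have hnm : (n:ℝ) ≤ m := by exact_mod_cast hm
    have hn2 : (2:ℝ) ≤ (n:ℝ) := by exact_mod_cast hn
    have hm2 : (2:ℝ) ≤ (m:ℝ) + 1 := by linarith
    have hH : H (m+1) = H m + 1/((m:ℝ)+1) := by
      rw [H, H, Finset.sum_Icc_succ_top (by omega : 1 ≤ m + 1)]
      push_cast; ring
    have hlog : Real.log (((m:ℕ):ℝ) + 1 + 1) - Real.log ((m:ℝ) + 1)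
        = Real.log (1 + 1/((m:ℝ)+1)) := by
      rw [show (1:ℝ) + 1/((m:ℝ)+1) = ((m:ℝ)+1+1) / ((m:ℝ)+1) by field_simp]
      rw [Real.log_div (by positivity) (by positivity)]
    have hpt := pt_bound ((m:ℝ)+1) hm2
    have hsplit : (H (m+1) - Real.log ((m+1:ℕ) + 1)) - (H n - Real.log (n + 1))
          - (phi (n + 1) - phi ((m+1:ℕ) + 1))
        = ((H m - Real.log (m + 1)) - (H n - Real.log (n + 1))
            - (phi (n + 1) - phi (m + 1)))
          + (1/((m:ℝ)+1) - Real.log (1 + 1/((m:ℝ)+1))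
              - (phi ((m:ℝ)+1) - phi ((m:ℝ)+1+1))) := by
      push_cast
      rw [hH, ← hlog]
      ring
    rw [hsplit]
    have htri := abs_add_le ((H m - Real.log (m + 1)) - (H n - Real.log (n + 1))
            - (phi (n + 1) - phi (m + 1)))
          (1/((m:ℝ)+1) - Real.log (1 + 1/((m:ℝ)+1))
              - (phi ((m:ℝ)+1) - phi ((m:ℝ)+1+1)))
    refine htri.trans ?_
    have hstep : 3 / ((m:ℝ)+1)^4 ≤ 3 / (n:ℝ)^2 * (1/m - 1/((m:ℝ)+1)) := by
      rw [show (1:ℝ)/m - 1/((m:ℝ)+1) = 1 / ((m:ℝ)*((m:ℝ)+1)) by field_simp; ring]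
      rw [div_mul_div_comm, mul_one]
      rw [div_le_div_iff₀ (by positivity) (by positivity)]
      have h1 : ((n:ℝ))^2 ≤ ((m:ℝ)+1)^2 := by nlinarith
      nlinarith [pow_pos (show (0:ℝ) < (m:ℝ)+1 by linarith) 2,
        mul_le_mul_of_nonneg_left h1 (mul_nonneg hm0.le (by linarith : (0:ℝ) ≤ (m:ℝ)+1))]
    have := add_le_add ih (hpt.trans hstep)
    refine this.trans ?_
    push_cast
    ring_nf
    linarith

lemma T_est (n : ℕ) (hn : 2 ≤ n) : |T n - phi ((n:ℝ) + 1)| ≤ 3 / (n:ℝ)^3 := by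
  have hn0 : (0:ℝ) < n := by positivity
  have hH : Tendsto (fun m : ℕ => H m - Real.log ((m:ℝ)+1)) atTop
      (𝓝 Real.eulerMascheroniConstant) := by
    refine Real.tendsto_harmonic_sub_log_add_one.congr fun m => ?_
    rw [H_eq]
  have hphi : Tendsto (fun m : ℕ => phi ((m:ℝ)+1)) atTop (𝓝 0) := by
    have a : Tendsto (fun x:ℝ => 1/(2*x)) atTop (𝓝 0) :=
      Tendsto.div_atTop tendsto_const_nhds (tendsto_id.const_mul_atTop two_pos)
    have b : Tendsto (fun x:ℝ => 1/(12*x^2)) atTop (𝓝 0) :=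
      Tendsto.div_atTop tendsto_const_nhds
        ((tendsto_pow_atTop (two_ne_zero)).const_mul_atTop (by norm_num))
    have l1 : Tendsto (fun x:ℝ => phi x) atTop (𝓝 0) := by
      have := a.add b; simpa [phi] using this
    exact l1.comp (tendsto_atTop_add_const_right atTop 1 tendsto_natCast_atTop_atTop)
  have habs : Tendsto (fun m : ℕ => |(H m - Real.log ((m:ℝ)+1)) - (H n - Real.log (n + 1))
        - (phi ((n:ℝ) + 1) - phi ((m:ℝ) + 1))|) atTop
      (𝓝 |T n - phi ((n:ℝ)+1)|) := by
    have h := ((hH.sub (tendsto_const_nhds (x := H n - Real.log ((n:ℝ) + 1)))).sub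
      ((tendsto_const_nhds (x := phi ((n:ℝ)+1))).sub hphi)).abs
    have : Real.eulerMascheroniConstant - (H n - Real.log (n + 1)) - (phi ((n:ℝ)+1) - 0)
        = T n - phi ((n:ℝ)+1) := by rw [T]; ring
    rwa [this] at h
  refine le_of_tendsto habs ?_
  filter_upwards [eventually_ge_atTop n] with m hm
  have h1 := sum_est n hn m hm
  refine h1.trans ?_
  have hm0 : (0:ℝ) ≤ 1/(m:ℝ) := by positivity
  have : 3 / (n:ℝ)^2 * (1/n - 1/m) ≤ 3 / (n:ℝ)^2 * (1/n) := by
    apply mul_le_mul_of_nonneg_left _ (by positivity)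
    linarith
  refine this.trans (le_of_eq ?_)
  field_simp




lemma R_bound (x : ℝ) (hx : 2 ≤ x) :
    |x^2 * (phi x + phi (x+1) - phi (x^2+1)) + 3/2 - x - 2/3| ≤ 4 / x := by
  have hx0 : (0:ℝ) < x := by linarith
  have hx1 : (0:ℝ) < x + 1 := by linarith
  have hx2 : (0:ℝ) < x^2 + 1 := by positivity
  have heq : x^2 * (phi x + phi (x+1) - phi (x^2+1)) + 3/2 - x - 2/3
      = 1/(2*(x+1)) + (-((2*x+1)/(12*(x+1)^2))) + (1/(2*(x^2+1))
        + (-(x^2/(12*(x^2+1)^2)))) := by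
    unfold phi; field_simp; ring
  rw [heq]
  have bA : |1/(2*(x+1))| ≤ 1/x := by
    rw [abs_of_pos (by positivity), div_le_div_iff₀ (by positivity) hx0]; nlinarith
  have bB : |(-((2*x+1)/(12*(x+1)^2)))| ≤ 1/x := by
    rw [abs_neg, abs_of_pos (by positivity), div_le_div_iff₀ (by positivity) hx0]; nlinarith
  have bC : |1/(2*(x^2+1))| ≤ 1/x := by
    rw [abs_of_pos (by positivity), div_le_div_iff₀ (by positivity) hx0]; nlinarith
  have bD : |(-(x^2/(12*(x^2+1)^2)))| ≤ 1/x := by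
    rw [abs_neg, abs_of_pos (by positivity), div_le_div_iff₀ (by positivity) hx0]
    nlinarith [sq_nonneg x, sq_nonneg (x^2-1), pow_pos hx0 3]
  calc |_| ≤ |1/(2*(x+1)) + (-((2*x+1)/(12*(x+1)^2)))| + |1/(2*(x^2+1)) + (-(x^2/(12*(x^2+1)^2)))| :=
        abs_add_le _ _
    _ ≤ (|1/(2*(x+1))| + |(-((2*x+1)/(12*(x+1)^2)))|) + (|1/(2*(x^2+1))| + |(-(x^2/(12*(x^2+1)^2)))|) :=
        add_le_add (abs_add_le _ _) (abs_add_le _ _)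
    _ ≤ (1/x + 1/x) + (1/x + 1/x) := by
        exact add_le_add (add_le_add bA bB) (add_le_add bC bD)
    _ = 4 / x := by ring




lemma abs_sub_le' (p q : ℝ) : |p - q| ≤ |p| + |q| := by
  rw [sub_eq_add_neg]
  exact (abs_add_le _ _).trans (by rw [abs_neg])

lemma abs6 (a b c d e f : ℝ) :
    |a + b - c + d - e + f| ≤ |a| + |b| + |c| + |d| + |e| + |f| := by
  calc |a + b - c + d - e + f| ≤ |a + b - c + d - e| + |f| := abs_add_le _ _
    _ ≤ (|a + b - c + d| + |e|) + |f| := by gcongr; exact abs_sub_le' _ _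
    _ ≤ ((|a + b - c| + |d|) + |e|) + |f| := by gcongr; exact abs_add_le _ _
    _ ≤ (((|a + b| + |c|) + |d|) + |e|) + |f| := by gcongr; exact abs_sub_le' _ _
    _ ≤ ((((|a| + |b|) + |c|) + |d|) + |e|) + |f| := by gcongr; exact abs_add_le _ _
    _ = |a| + |b| + |c| + |d| + |e| + |f| := by ring

lemma key (n : ℕ) (hn : 3 ≤ n) :
    |(n:ℝ)^2 * (Real.eulerMascheroniConstant -
        (H (n-1) - (H (n^2) - H n))) - 2/3|
      ≤ (40:ℝ) / n := by
  have hx3 : (3:ℝ) ≤ (n:ℝ) := by exact_mod_cast hn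
  set x : ℝ := (n:ℝ) with hxdef
  have hx0 : (0:ℝ) < x := by linarith
  have hx2 : (2:ℝ) ≤ x := by linarith
  have hx1 : (0:ℝ) < x - 1 := by linarith
  -- casts
  have c1 : ((n-1:ℕ):ℝ) = x - 1 := by
    rw [Nat.cast_sub (by omega)]; norm_num; exact hxdef.symm
  have c2 : ((n^2:ℕ):ℝ) = x^2 := by push_cast; ring
  -- main identity
  have hmain : Real.eulerMascheroniConstant - (H (n-1) - (H (n^2) - H n))
      = T (n-1) + T n - T (n^2)
        + (Real.log (x^2+1) - Real.log x - Real.log (x+1)) := by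
    rw [T, T, T, c1, c2]
    rw [show x - 1 + 1 = x by ring]
    ring
  -- log split
  have hlA : Real.log (x^2+1) = 2 * Real.log x + Real.log (1 + 1/x^2) := by
    rw [show x^2+1 = x^2 * (1 + 1/x^2) by field_simp]
    rw [Real.log_mul (by positivity) (by positivity), Real.log_pow]
    push_cast; ring
  have hlB : Real.log (x+1) = Real.log x + Real.log (1 + 1/x) := by
    rw [show x+1 = x * (1 + 1/x) by field_simp]
    rw [Real.log_mul hx0.ne' (by positivity)]
  -- estimates
  have e1 := T_est (n-1) (by omega)
  rw [c1, show x - 1 + 1 = x by ring] at e1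
  have e2 := T_est n (by omega)
  have e3 := T_est (n^2) (by nlinarith [hn])
  rw [c2] at e3
  have l1 := logb1 (x^2) (by nlinarith)
  have l2 := logb2 x hx2
  have r := R_bound x hx2
  -- decomposition
  have hdecomp : x^2 * (Real.eulerMascheroniConstant - (H (n-1) - (H (n^2) - H n))) - 2/3
      = x^2 * (T (n-1) - phi x) + x^2 * (T n - phi (x+1)) - x^2 * (T (n^2) - phi (x^2+1))
        + x^2 * (Real.log (1+1/x^2) - 1/x^2)
        - x^2 * (Real.log (1+1/x) - (1/x - 1/(2*x^2)))
        + (x^2 * (phi x + phi (x+1) - phi (x^2+1)) + 3/2 - x - 2/3) := by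
    rw [hmain, hlA, hlB]
    field_simp
    ring
  rw [hdecomp]
  refine (abs6 _ _ _ _ _ _).trans ?_
  have hxsq : (0:ℝ) ≤ x^2 := sq_nonneg x
  have hcube : x^3 ≤ (2*(x-1))^3 := pow_le_pow_left₀ hx0.le (by linarith) 3
  have m1 : |x^2 * (T (n-1) - phi x)| ≤ 24/x := by
    rw [abs_mul, abs_of_nonneg hxsq]
    calc x^2 * |T (n-1) - phi x| ≤ x^2 * (3/(x-1)^3) :=
          mul_le_mul_of_nonneg_left e1 hxsq
      _ ≤ 24/x := by
          rw [show x^2 * (3/(x-1)^3) = (3*x^2)/(x-1)^3 by ring,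
            div_le_div_iff₀ (by positivity) hx0]
          nlinarith [hcube]
  have m2 : |x^2 * (T n - phi (x+1))| ≤ 3/x := by
    rw [abs_mul, abs_of_nonneg hxsq]
    calc x^2 * |T n - phi (x+1)| ≤ x^2 * (3/x^3) :=
          mul_le_mul_of_nonneg_left e2 hxsq
      _ = 3/x := by field_simp
  have m3 : |x^2 * (T (n^2) - phi (x^2+1))| ≤ 3/x := by
    rw [abs_mul, abs_of_nonneg hxsq]
    calc x^2 * |T (n^2) - phi (x^2+1)| ≤ x^2 * (3/(x^2)^3) :=
          mul_le_mul_of_nonneg_left e3 hxsq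
      _ ≤ 3/x := by
          rw [show x^2 * (3/(x^2)^3) = 3/x^4 by field_simp,
            div_le_div_iff₀ (by positivity) hx0]
          nlinarith [pow_pos hx0 4]
  have m4 : |x^2 * (Real.log (1+1/x^2) - 1/x^2)| ≤ 2/x := by
    rw [abs_mul, abs_of_nonneg hxsq]
    calc x^2 * |Real.log (1+1/x^2) - 1/x^2| ≤ x^2 * (2/(x^2)^2) :=
          mul_le_mul_of_nonneg_left l1 hxsq
      _ ≤ 2/x := by
          rw [show x^2 * (2/(x^2)^2) = 2/x^2 by field_simp,
            div_le_div_iff₀ (by positivity) hx0]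
          nlinarith
  have m5 : |x^2 * (Real.log (1+1/x) - (1/x - 1/(2*x^2)))| ≤ 2/x := by
    rw [abs_mul, abs_of_nonneg hxsq]
    calc x^2 * |Real.log (1+1/x) - (1/x - 1/(2*x^2))| ≤ x^2 * (2/x^3) :=
          mul_le_mul_of_nonneg_left l2 hxsq
      _ = 2/x := by field_simp
  have : (24:ℝ)/x + 3/x + 3/x + 2/x + 2/x + 4/x ≤ 40/x := by
    rw [← add_div, ← add_div, ← add_div, ← add_div,
      ← add_div, div_le_div_iff₀ hx0 hx0]
    nlinarith
  exact (add_le_add (add_le_add (add_le_add (add_le_add (add_le_add m1 m2) m3) m4) m5) r).trans this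


end GammaAux


theorem tendsto_sq_mul_gamma_sub_b :
    Tendsto (fun n : ℕ => (n : ℝ) ^ 2 *
        (Real.eulerMascheroniConstant -
          ((∑ k ∈ Finset.Icc 1 (n - 1), (1 : ℝ) / k) -
            ∑ k ∈ Finset.Icc (n + 1) (n ^ 2), (1 : ℝ) / k)))
      atTop (nhds (2 / 3)) := by
  have h0 : Tendsto (fun n : ℕ => (40:ℝ)/n) atTop (𝓝 0) :=
    tendsto_const_div_atTop_nhds_zero_nat 40
  have h1 : Tendsto (fun n : ℕ => (n : ℝ) ^ 2 *
        (Real.eulerMascheroniConstant -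
          ((∑ k ∈ Finset.Icc 1 (n - 1), (1 : ℝ) / k) -
            ∑ k ∈ Finset.Icc (n + 1) (n ^ 2), (1 : ℝ) / k)) - 2/3) atTop (𝓝 0) := by
    refine squeeze_zero_norm' ?_ h0
    filter_upwards [eventually_ge_atTop 3] with n hn
    have hS2 : (∑ k ∈ Finset.Icc (n+1) (n^2), (1:ℝ)/k) = GammaAux.H (n^2) - GammaAux.H n := by
      have hIcc : ∀ m : ℕ, Finset.Icc 1 m = Finset.Ioc 0 m := by
        intro m; ext k; simp only [Finset.mem_Icc, Finset.mem_Ioc]; omega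
      have hIcc2 : Finset.Icc (n+1) (n^2) = Finset.Ioc n (n^2) := by
        ext k; simp only [Finset.mem_Icc, Finset.mem_Ioc]; omega
      have h := Finset.sum_Ioc_consecutive (fun k : ℕ => (1:ℝ)/k)
        (Nat.zero_le n) (Nat.le_self_pow two_ne_zero n)
      rw [GammaAux.H, GammaAux.H, hIcc, hIcc, hIcc2]
      linarith [h]
    rw [Real.norm_eq_abs, hS2]
    exact GammaAux.key n hn
  have h2 := h1.add (tendsto_const_nhds (x := (2:ℝ)/3))
  rw [zero_add] at h2
  refine h2.congr fun n => by ring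
end

section
/- Define Z(q) as the number of divisors of q strictly less than q^{1/4} minus the number of divisors of q strictly between q^{1/4} and q^{1/2}. Then (1/B)∑_{q=1}^B Z(q) converges to γ as B → ∞. -/
open Finset Real Filter
open scoped Classical

-- count multiples in Ioc
lemma count_mul (a b d : ℕ) : ((Finset.Ioc a b).filter (fun q => d ∣ q)).card = b / d - a / d := by
  rcases le_total a b with h | h
  · have hu : Finset.Ioc 0 a ∪ Finset.Ioc a b = Finset.Ioc 0 b :=
      Finset.Ioc_union_Ioc_eq_Ioc (Nat.zero_le a) h
    have hd : Disjoint (Finset.Ioc 0 a) (Finset.Ioc a b) := by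
      simp [Finset.disjoint_left, Finset.mem_Ioc]
      omega
    have := Nat.Ioc_filter_dvd_card_eq_div b d
    rw [← hu, Finset.filter_union, Finset.card_union_of_disjoint (hd.mono (Finset.filter_subset _ _) (Finset.filter_subset _ _)), Nat.Ioc_filter_dvd_card_eq_div] at this
    omega
  · rw [Finset.Ioc_eq_empty (by omega), Finset.filter_empty, Finset.card_empty]
    have := Nat.div_le_div_right (c := d) h
    omega

lemma Acard (B d : ℕ) :
    ((Finset.Icc 1 B).filter (fun q => d ∣ q ∧ d^4 < q)).card = B / d - d^4 / d := by
  have : (Finset.Icc 1 B).filter (fun q => d ∣ q ∧ d^4 < q)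
      = (Finset.Ioc (d^4) B).filter (fun q => d ∣ q) := by
    ext q
    simp only [Finset.mem_filter, Finset.mem_Icc, Finset.mem_Ioc]
    constructor
    · rintro ⟨⟨h1, h2⟩, h3, h4⟩; exact ⟨⟨h4, h2⟩, h3⟩
    · rintro ⟨⟨h1, h2⟩, h3⟩; exact ⟨⟨by omega, h2⟩, h3, h1⟩
  rw [this, count_mul]

-- C-count when d^4 ≤ B
lemma Ccard_small (B d : ℕ) (hd : 1 ≤ d) (h : d^4 ≤ B) :
    ((Finset.Icc 1 B).filter (fun q => d ∣ q ∧ d^2 < q ∧ q < d^4)).card = (d^3 - 1) - d := by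
  have key : (Finset.Icc 1 B).filter (fun q => d ∣ q ∧ d^2 < q ∧ q < d^4)
      = (Finset.Ioc (d^2) (d^4 - d)).filter (fun q => d ∣ q) := by
    ext q
    simp only [Finset.mem_filter, Finset.mem_Icc, Finset.mem_Ioc]
    have hdd : d ≤ d^4 := Nat.le_self_pow (by norm_num) d
    constructor
    · rintro ⟨⟨h1, h2⟩, ⟨k, rfl⟩, h4, h5⟩
      refine ⟨⟨h4, ?_⟩, ⟨k, rfl⟩⟩
      have hk : k < d^3 := by
        rw [show d^4 = d*d^3 by ring] at h5
        exact Nat.lt_of_mul_lt_mul_left h5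
      have hmul : d * (d^3 - 1) = d^4 - d := by
        rw [Nat.mul_sub, mul_one, show d*d^3 = d^4 by ring]
      have := Nat.mul_le_mul_left d (show k ≤ d^3 - 1 by omega)
      omega
    · rintro ⟨⟨h1, h2⟩, h3⟩
      exact ⟨⟨by nlinarith, by omega⟩, h3, h1, by omega⟩
  rw [key, count_mul]
  have h1 : (d^4 - d) / d = d^3 - 1 := by
    have : d^4 - d = d * (d^3 - 1) := by
      rw [Nat.mul_sub, mul_one, show d*d^3 = d^4 by ring]
    rw [this, Nat.mul_div_cancel_left _ hd]
  have h2 : d^2 / d = d := by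
    rw [pow_two, Nat.mul_div_cancel_left _ hd]
  rw [h1, h2]

lemma A_eq_zero {B d : ℕ} (h : B < d^4) :
    ((Finset.Icc 1 B).filter (fun q => d ∣ q ∧ d^4 < q)).card = 0 := by
  rw [Finset.card_eq_zero, Finset.filter_eq_empty_iff]
  rintro q hq ⟨-, h4⟩
  rw [Finset.mem_Icc] at hq
  omega

lemma A_eq_zero' {B d : ℕ} (h : B < d^2) :
    ((Finset.Icc 1 B).filter (fun q => d ∣ q ∧ d^4 < q)).card = 0 := by
  rcases Nat.eq_zero_or_pos d with rfl | hd
  · rw [Finset.card_eq_zero, Finset.filter_eq_empty_iff]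
    rintro q hq ⟨hdvd, h4⟩
    rw [Finset.mem_Icc] at hq
    rw [Nat.zero_dvd] at hdvd
    omega
  · exact A_eq_zero (lt_of_lt_of_le h (Nat.pow_le_pow_right hd (by norm_num)))

lemma C_eq_zero {B d : ℕ} (h : B < d^2) :
    ((Finset.Icc 1 B).filter (fun q => d ∣ q ∧ d^2 < q ∧ q < d^4)).card = 0 := by
  rw [Finset.card_eq_zero, Finset.filter_eq_empty_iff]
  rintro q hq ⟨-, h2, -⟩
  rw [Finset.mem_Icc] at hq
  omega

lemma Ccard_mid {B d : ℕ} (hd : 1 ≤ d) (h : B < d^4) :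
    ((Finset.Icc 1 B).filter (fun q => d ∣ q ∧ d^2 < q ∧ q < d^4)).card = B / d - d := by
  have key : (Finset.Icc 1 B).filter (fun q => d ∣ q ∧ d^2 < q ∧ q < d^4)
      = (Finset.Ioc (d^2) B).filter (fun q => d ∣ q) := by
    ext q
    simp only [Finset.mem_filter, Finset.mem_Icc, Finset.mem_Ioc]
    constructor
    · rintro ⟨⟨h1, h2⟩, h3, h4, h5⟩
      exact ⟨⟨h4, h2⟩, h3⟩
    · rintro ⟨⟨h1, h2⟩, h3⟩
      exact ⟨⟨by omega, h2⟩, h3, h1, by omega⟩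
  rw [key, count_mul, pow_two, Nat.mul_div_cancel_left _ hd]

lemma cond_quarter (d q : ℕ) : ((d:ℝ) < (q:ℝ) ^ ((1:ℝ)/4)) ↔ d^4 < q := by
  have h4 : ((q:ℝ) ^ ((1:ℝ)/4)) ^ (4:ℕ) = (q:ℝ) := by
    rw [← Real.rpow_natCast ((q:ℝ) ^ ((1:ℝ)/4)) 4, ← Real.rpow_mul (Nat.cast_nonneg q)]
    norm_num
  rw [← pow_lt_pow_iff_left₀ (Nat.cast_nonneg d)
      (Real.rpow_nonneg (Nat.cast_nonneg q) _) (by norm_num : (4:ℕ) ≠ 0), h4]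
  exact_mod_cast Iff.rfl

lemma cond_half (d q : ℕ) : ((d:ℝ) < (q:ℝ) ^ ((1:ℝ)/2)) ↔ d^2 < q := by
  have h2 : ((q:ℝ) ^ ((1:ℝ)/2)) ^ (2:ℕ) = (q:ℝ) := by
    rw [← Real.rpow_natCast ((q:ℝ) ^ ((1:ℝ)/2)) 2, ← Real.rpow_mul (Nat.cast_nonneg q)]
    norm_num
  rw [← pow_lt_pow_iff_left₀ (Nat.cast_nonneg d)
      (Real.rpow_nonneg (Nat.cast_nonneg q) _) (by norm_num : (2:ℕ) ≠ 0), h2]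
  exact_mod_cast Iff.rfl

lemma cond_quarter' (d q : ℕ) : ((q:ℝ) ^ ((1:ℝ)/4) < (d:ℝ)) ↔ q < d^4 := by
  have h4 : ((q:ℝ) ^ ((1:ℝ)/4)) ^ (4:ℕ) = (q:ℝ) := by
    rw [← Real.rpow_natCast ((q:ℝ) ^ ((1:ℝ)/4)) 4, ← Real.rpow_mul (Nat.cast_nonneg q)]
    norm_num
  rw [← pow_lt_pow_iff_left₀ (Real.rpow_nonneg (Nat.cast_nonneg q) _)
      (Nat.cast_nonneg d) (by norm_num : (4:ℕ) ≠ 0), h4]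
  exact_mod_cast Iff.rfl

lemma filt1 {B q : ℕ} (hq : q ∈ Finset.Icc 1 B) :
    q.divisors.filter (fun d : ℕ => (d:ℝ) < (q:ℝ) ^ ((1:ℝ)/4))
      = (Finset.Icc 1 B).filter (fun d => d ∣ q ∧ d^4 < q) := by
  rw [Finset.mem_Icc] at hq
  ext d
  simp only [Finset.mem_filter, Nat.mem_divisors, Finset.mem_Icc]
  rw [cond_quarter]
  constructor
  · rintro ⟨⟨hdvd, hq0⟩, h4⟩
    have hd0 : d ≠ 0 := by rintro rfl; rw [Nat.zero_dvd] at hdvd; omega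
    exact ⟨⟨by omega, le_trans (Nat.le_of_dvd (by omega) hdvd) hq.2⟩, hdvd, h4⟩
  · rintro ⟨-, hdvd, h4⟩
    exact ⟨⟨hdvd, by omega⟩, h4⟩

lemma filt2 {B q : ℕ} (hq : q ∈ Finset.Icc 1 B) :
    q.divisors.filter (fun d : ℕ => (q:ℝ) ^ ((1:ℝ)/4) < (d:ℝ) ∧ (d:ℝ) < (q:ℝ) ^ ((1:ℝ)/2))
      = (Finset.Icc 1 B).filter (fun d => d ∣ q ∧ d^2 < q ∧ q < d^4) := by
  rw [Finset.mem_Icc] at hq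
  ext d
  simp only [Finset.mem_filter, Nat.mem_divisors, Finset.mem_Icc]
  rw [cond_quarter', cond_half]
  constructor
  · rintro ⟨⟨hdvd, hq0⟩, h4, h2⟩
    have hd0 : d ≠ 0 := by rintro rfl; rw [Nat.zero_dvd] at hdvd; omega
    exact ⟨⟨by omega, le_trans (Nat.le_of_dvd (by omega) hdvd) hq.2⟩, hdvd, h2, h4⟩
  · rintro ⟨-, hdvd, h2, h4⟩
    exact ⟨⟨hdvd, by omega⟩, h4, h2⟩

lemma coe_divisors_card (s : Finset ℕ) (p : ℝ → Prop) [DecidablePred p] :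
    ((do let a ← s; pure ((a:ℝ)) : Finset ℝ).filter p).card
      = (Finset.filter (fun a : ℕ => p (a:ℝ)) s).card := by
  have h : (do let a ← s; pure ((a:ℝ)) : Finset ℝ) = Finset.image (fun a : ℕ => (a:ℝ)) s :=
    Finset.sup_singleton_apply _ _
  rw [h, Finset.filter_image, Finset.card_image_of_injective _ Nat.cast_injective]

lemma sum_identity {B : ℕ} (hB : 1 ≤ B) :
    ∑ d ∈ Finset.Icc 1 B,
      ((((Finset.Icc 1 B).filter (fun q => d ∣ q ∧ d^4 < q)).card : ℝ)
        - (((Finset.Icc 1 B).filter (fun q => d ∣ q ∧ d^2 < q ∧ q < d^4)).card : ℝ))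
    = ((∑ d ∈ Finset.Ioc 0 (Nat.sqrt (Nat.sqrt B)), (((B/d : ℕ) : ℝ) - 2*(d:ℝ)^3 + d + 1)) - 1)
      + ∑ d ∈ Finset.Ioc (Nat.sqrt (Nat.sqrt B)) (Nat.sqrt B), ((d:ℝ) - ((B/d : ℕ):ℝ)) := by
  set f : ℕ → ℝ := fun d =>
      ((((Finset.Icc 1 B).filter (fun q => d ∣ q ∧ d^4 < q)).card : ℝ)
        - (((Finset.Icc 1 B).filter (fun q => d ∣ q ∧ d^2 < q ∧ q < d^4)).card : ℝ)) with hf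
  set M := Nat.sqrt B with hM
  set K := Nat.sqrt M with hK
  have hMB : M ≤ B := Nat.sqrt_le_self B
  have hKM : K ≤ M := Nat.sqrt_le_self M
  have hM1 : 1 ≤ M := Nat.le_sqrt.2 (by omega)
  have hK1 : 1 ≤ K := Nat.le_sqrt.2 (by omega)
  have hsplit : Finset.Icc 1 B = Finset.Ioc 0 B := by rw [← Finset.Icc_add_one_left_eq_Ioc]; rfl
  rw [hsplit]
  rw [← Finset.sum_Ioc_consecutive _ (Nat.zero_le M) hMB,
      ← Finset.sum_Ioc_consecutive _ (Nat.zero_le K) hKM]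
  have h3 : ∑ d ∈ Finset.Ioc M B,
      ((((Finset.Icc 1 B).filter (fun q => d ∣ q ∧ d^4 < q)).card : ℝ)
        - (((Finset.Icc 1 B).filter (fun q => d ∣ q ∧ d^2 < q ∧ q < d^4)).card : ℝ)) = 0 := by
    apply Finset.sum_eq_zero
    intro d hd
    rw [Finset.mem_Ioc] at hd
    have hB2 : B < d^2 := by
      have := Nat.sqrt_lt.mp hd.1
      nlinarith
    rw [A_eq_zero' hB2, C_eq_zero hB2]
    simp
  have h2 : ∑ d ∈ Finset.Ioc K M,
      ((((Finset.Icc 1 B).filter (fun q => d ∣ q ∧ d^4 < q)).card : ℝ)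
        - (((Finset.Icc 1 B).filter (fun q => d ∣ q ∧ d^2 < q ∧ q < d^4)).card : ℝ))
      = ∑ d ∈ Finset.Ioc K M, ((d:ℝ) - ((B/d : ℕ):ℝ)) := by
    apply Finset.sum_congr rfl
    intro d hd
    rw [Finset.mem_Ioc] at hd
    have hd0 : 1 ≤ d := by omega
    have hd2 : d * d ≤ B := Nat.le_sqrt.mp hd.2
    have hB4 : B < d^4 := by
      have h1 : M < d * d := Nat.sqrt_lt.mp hd.1
      have h2 : B < (d*d)*(d*d) := Nat.sqrt_lt.mp h1
      nlinarith
    have hle : d ≤ B / d := (Nat.le_div_iff_mul_le (by omega)).2 hd2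
    rw [A_eq_zero hB4, Ccard_mid hd0 hB4, Nat.cast_sub hle]
    push_cast
    ring
  have h1 : ∑ d ∈ Finset.Ioc 0 K,
      ((((Finset.Icc 1 B).filter (fun q => d ∣ q ∧ d^4 < q)).card : ℝ)
        - (((Finset.Icc 1 B).filter (fun q => d ∣ q ∧ d^2 < q ∧ q < d^4)).card : ℝ))
      = (∑ d ∈ Finset.Ioc 0 K, (((B/d : ℕ) : ℝ) - 2*(d:ℝ)^3 + d + 1)) - 1 := by
    have step : ∀ d ∈ Finset.Ioc 0 K,
        ((((Finset.Icc 1 B).filter (fun q => d ∣ q ∧ d^4 < q)).card : ℝ)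
          - (((Finset.Icc 1 B).filter (fun q => d ∣ q ∧ d^2 < q ∧ q < d^4)).card : ℝ))
        = ((((B/d : ℕ) : ℝ) - 2*(d:ℝ)^3 + d + 1) - if d = 1 then 1 else 0) := by
      intro d hd
      rw [Finset.mem_Ioc] at hd
      have hd0 : 1 ≤ d := hd.1
      have hB4 : d^4 ≤ B := by
        have h1 : d * d ≤ M := Nat.le_sqrt.mp hd.2
        have h2 : (d*d)*(d*d) ≤ B := Nat.le_sqrt.mp h1
        nlinarith
      have hA : ((Finset.Icc 1 B).filter (fun q => d ∣ q ∧ d^4 < q)).card = B/d - d^3 := by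
        rw [Acard, show d^4 = d*d^3 by ring, Nat.mul_div_cancel_left _ hd0]
      rw [hA, Ccard_small B d hd0 hB4]
      have hcube : d^3 ≤ B / d := by
        apply (Nat.le_div_iff_mul_le (by omega)).2
        nlinarith
      rcases Nat.lt_or_ge d 2 with hd1 | hd2
      · have : d = 1 := by omega
        subst this
        simp only [if_pos rfl]
        rw [Nat.cast_sub (by simpa using hcube)]
        push_cast
        ring
      · have hc1 : 1 ≤ d^3 := Nat.one_le_pow _ _ hd0
        have hc2 : d ≤ d^3 - 1 := by
          have h4 : 4 ≤ d^2 := by nlinarith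
          have h5 : d*4 ≤ d*d^2 := Nat.mul_le_mul_left d h4
          have h6 : d*d^2 = d^3 := by ring
          omega
        rw [if_neg (by omega), Nat.cast_sub hcube, Nat.cast_sub hc2, Nat.cast_sub hc1]
        push_cast
        ring
    rw [Finset.sum_congr rfl step, Finset.sum_sub_distrib]
    congr 1
    rw [Finset.sum_ite_eq' (Finset.Ioc 0 K) 1 (fun _ => (1:ℝ))]
    rw [if_pos (by rw [Finset.mem_Ioc]; omega)]
  rw [h1, h2, h3]
  ring

noncomputable def Hn (n : ℕ) : ℝ := ((harmonic n : ℚ) : ℝ)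

lemma Hn_eq (n : ℕ) : Hn n = ∑ d ∈ Finset.Ioc 0 n, (1:ℝ)/d := by
  rw [Hn, harmonic_eq_sum_Icc]
  push_cast
  rw [← Finset.Icc_add_one_left_eq_Ioc]
  simp [one_div]

lemma tendsto_nat_sqrt : Tendsto Nat.sqrt atTop atTop := by
  apply tendsto_atTop_atTop.2
  intro b
  refine ⟨b*b, fun a ha => ?_⟩
  calc b = Nat.sqrt (b*b) := (Nat.sqrt_eq b).symm
    _ ≤ Nat.sqrt a := Nat.sqrt_le_sqrt ha

lemma tendsto_log_succ_sub : Tendsto (fun x : ℝ ↦ Real.log (x + 1) - Real.log x) atTop (nhds 0) := by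
  suffices Tendsto (fun x : ℝ ↦ Real.log (1 + 1 / x)) atTop (nhds 0) by
    apply this.congr'
    filter_upwards [eventually_gt_atTop 0] with x hx
    rw [← Real.log_div (by positivity) (by positivity), add_div, div_self hx.ne']
  simpa only [add_zero, Real.log_one, id] using
    ((tendsto_const_nhds.div_atTop tendsto_id).const_add 1).log (by positivity)

lemma tendsto_harmonic_real : Tendsto (fun n : ℕ => Hn n - Real.log n) atTop
    (nhds Real.eulerMascheroniConstant) := Real.tendsto_harmonic_sub_log

lemma tendsto_one_div_nat : Tendsto (fun n : ℕ => 1/(n:ℝ)) atTop (nhds 0) :=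
  tendsto_one_div_atTop_nhds_zero_nat

lemma sum_id_Ioc (n : ℕ) : ∑ d ∈ Finset.Ioc 0 n, (d:ℝ) = (n:ℝ)*(n+1)/2 := by
  induction n with
  | zero => simp
  | succ n ih =>
    rw [Finset.sum_Ioc_succ_top (Nat.zero_le _), ih]
    push_cast
    ring

lemma sum_cubes_Ioc (n : ℕ) : ∑ d ∈ Finset.Ioc 0 n, (d:ℝ)^3 = ((n:ℝ)*(n+1)/2)^2 := by
  induction n with
  | zero => simp
  | succ n ih =>
    rw [Finset.sum_Ioc_succ_top (Nat.zero_le _), ih]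
    push_cast
    ring

-- basic size facts, B ≥ 1, K := sqrt (sqrt B), M := sqrt B
lemma size_facts {B : ℕ} (hB : 1 ≤ B) :
    1 ≤ Nat.sqrt (Nat.sqrt B) ∧ 1 ≤ Nat.sqrt B ∧
    (Nat.sqrt (Nat.sqrt B))^4 ≤ B ∧ B < ((Nat.sqrt (Nat.sqrt B))+1)^4 ∧
    (Nat.sqrt B)^2 ≤ B ∧ B < ((Nat.sqrt B)+1)^2 ∧
    (Nat.sqrt (Nat.sqrt B))^2 ≤ Nat.sqrt B ∧ Nat.sqrt B < ((Nat.sqrt (Nat.sqrt B))+1)^2 := by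
  set M := Nat.sqrt B
  set K := Nat.sqrt M
  have hM1 : 1 ≤ M := Nat.le_sqrt.2 (by omega)
  have hK1 : 1 ≤ K := Nat.le_sqrt.2 (by omega)
  have hMB : M^2 ≤ B := Nat.sqrt_le' B
  have hKM : K^2 ≤ M := Nat.sqrt_le' M
  have hBM : B < (M+1)^2 := Nat.lt_succ_sqrt' B
  have hMK : M < (K+1)^2 := Nat.lt_succ_sqrt' M
  refine ⟨hK1, hM1, ?_, ?_, by nlinarith, by nlinarith, by nlinarith, by nlinarith⟩
  · nlinarith
  · nlinarith

lemma sum_div_le (B a b : ℕ) :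
    ∑ d ∈ Finset.Ioc a b, ((B/d : ℕ):ℝ) ≤ (B:ℝ) * ∑ d ∈ Finset.Ioc a b, 1/(d:ℝ) := by
  rw [Finset.mul_sum]
  apply Finset.sum_le_sum
  intro d hd
  rw [mul_one_div]
  exact Nat.cast_div_le

lemma sum_div_ge (B a b : ℕ) (hab : a ≤ b) :
    (B:ℝ) * (∑ d ∈ Finset.Ioc a b, 1/(d:ℝ)) - ((b:ℝ) - a)
      ≤ ∑ d ∈ Finset.Ioc a b, ((B/d : ℕ):ℝ) := by
  have key : ∀ d ∈ Finset.Ioc a b, (B:ℝ) * (1/(d:ℝ)) - 1 ≤ ((B/d : ℕ):ℝ) := by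
    intro d hd
    rw [Finset.mem_Ioc] at hd
    have hd0 : 0 < d := by omega
    have hd0' : (0:ℝ) < d := by exact_mod_cast hd0
    have h := Nat.lt_div_mul_add (a := B) hd0
    have h' : (B:ℝ) < ((B/d : ℕ):ℝ) * d + d := by exact_mod_cast h
    rw [mul_one_div]
    rw [div_sub_one hd0'.ne', div_le_iff₀ hd0']
    nlinarith
  have := Finset.sum_le_sum key
  rw [Finset.sum_sub_distrib, Finset.sum_const, ← Finset.mul_sum] at this
  rw [Nat.card_Ioc] at this
  have hc : ((b - a : ℕ):ℝ) = (b:ℝ) - a := by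
    rw [Nat.cast_sub hab]
  simp only [nsmul_eq_mul, mul_one] at this
  rw [hc] at this
  linarith

lemma errA_tendsto : Tendsto (fun B : ℕ =>
    (∑ d ∈ Finset.Ioc 0 (Nat.sqrt (Nat.sqrt B)), ((B/d : ℕ):ℝ))/(B:ℝ)
      - Hn (Nat.sqrt (Nat.sqrt B))) atTop (nhds 0) := by
  apply tendsto_of_tendsto_of_tendsto_of_le_of_le'
      (g := fun B : ℕ => -(1/(Nat.sqrt B : ℝ))) (h := fun _ => (0:ℝ))
  · rw [show (0:ℝ) = -0 by norm_num]
    exact ((tendsto_one_div_nat).comp tendsto_nat_sqrt).neg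
  · exact tendsto_const_nhds
  · filter_upwards [eventually_ge_atTop 1] with B hB
    obtain ⟨hK1, hM1, hK4, -, hM2, -, hKM2, -⟩ := size_facts hB
    set M := Nat.sqrt B
    set K := Nat.sqrt M
    have hB0 : (0:ℝ) < B := by exact_mod_cast hB
    have hM0 : (0:ℝ) < M := by exact_mod_cast hM1
    have hge := sum_div_ge B 0 K (Nat.zero_le K)
    have h1 : (Hn K) - (K:ℝ)/B ≤ (∑ d ∈ Finset.Ioc 0 K, ((B/d : ℕ):ℝ))/(B:ℝ) := by
      rw [le_div_iff₀ hB0]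
      have expand : ((Hn K) - (K:ℝ)/B) * B = (B:ℝ) * (∑ d ∈ Finset.Ioc 0 K, 1/(d:ℝ)) - K := by
        rw [Hn_eq]; field_simp
      rw [expand]
      push_cast at hge
      linarith
    have h2 : (K:ℝ)/B ≤ 1/(M:ℝ) := by
      rw [div_le_div_iff₀ hB0 hM0]
      have hKM : (K:ℝ) ≤ M := by
        exact_mod_cast le_trans (Nat.le_of_eq rfl) (Nat.sqrt_le_self M)
      have hM2' : (M:ℝ)*M ≤ B := by exact_mod_cast (by nlinarith : M*M ≤ B)
      nlinarith
    linarith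
  · filter_upwards [eventually_ge_atTop 1] with B hB
    have hB0 : (0:ℝ) < B := by exact_mod_cast hB
    have hle := sum_div_le B 0 (Nat.sqrt (Nat.sqrt B))
    rw [Hn_eq, sub_nonpos, div_le_iff₀ hB0]
    linarith [hle]

lemma Hn_diff {a b : ℕ} (h : a ≤ b) : Hn b - Hn a = ∑ d ∈ Finset.Ioc a b, 1/(d:ℝ) := by
  rw [Hn_eq, Hn_eq, ← Finset.sum_Ioc_consecutive (fun d => 1/(d:ℝ)) (Nat.zero_le a) h]
  ring

lemma errB_tendsto : Tendsto (fun B : ℕ =>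
    (∑ d ∈ Finset.Ioc (Nat.sqrt (Nat.sqrt B)) (Nat.sqrt B), ((B/d : ℕ):ℝ))/(B:ℝ)
      - (Hn (Nat.sqrt B) - Hn (Nat.sqrt (Nat.sqrt B)))) atTop (nhds 0) := by
  apply tendsto_of_tendsto_of_tendsto_of_le_of_le'
      (g := fun B : ℕ => -(1/(Nat.sqrt B : ℝ))) (h := fun _ => (0:ℝ))
  · rw [show (0:ℝ) = -0 by norm_num]
    exact ((tendsto_one_div_nat).comp tendsto_nat_sqrt).neg
  · exact tendsto_const_nhds
  · filter_upwards [eventually_ge_atTop 1] with B hB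
    obtain ⟨hK1, hM1, hK4, -, hM2, -, hKM2, -⟩ := size_facts hB
    set M := Nat.sqrt B
    set K := Nat.sqrt M
    have hKM : K ≤ M := Nat.sqrt_le_self M
    have hB0 : (0:ℝ) < B := by exact_mod_cast hB
    have hM0 : (0:ℝ) < M := by exact_mod_cast hM1
    have hge := sum_div_ge B K M hKM
    rw [Hn_diff hKM]
    have h1 : (∑ d ∈ Finset.Ioc K M, 1/(d:ℝ)) - (M:ℝ)/B
        ≤ (∑ d ∈ Finset.Ioc K M, ((B/d : ℕ):ℝ))/(B:ℝ) := by
      rw [le_div_iff₀ hB0]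
      have hK0 : (0:ℝ) ≤ K := by positivity
      have expand : ((∑ d ∈ Finset.Ioc K M, 1/(d:ℝ)) - (M:ℝ)/B) * B
          = (B:ℝ) * (∑ d ∈ Finset.Ioc K M, 1/(d:ℝ)) - M := by field_simp
      rw [expand]
      linarith
    have h2 : (M:ℝ)/B ≤ 1/(M:ℝ) := by
      rw [div_le_div_iff₀ hB0 hM0]
      have hM2' : (M:ℝ)*M ≤ B := by exact_mod_cast (by nlinarith : M*M ≤ B)
      nlinarith
    linarith
  · filter_upwards [eventually_ge_atTop 1] with B hB
    obtain ⟨hK1, hM1, -, -, -, -, -, -⟩ := size_facts hB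
    have hKM : Nat.sqrt (Nat.sqrt B) ≤ Nat.sqrt B := Nat.sqrt_le_self _
    have hB0 : (0:ℝ) < B := by exact_mod_cast hB
    have hle := sum_div_le B (Nat.sqrt (Nat.sqrt B)) (Nat.sqrt B)
    rw [Hn_diff hKM, sub_nonpos, div_le_iff₀ hB0]
    linarith [hle]

lemma logpart_tendsto : Tendsto (fun B : ℕ =>
    2*Real.log (Nat.sqrt (Nat.sqrt B) : ℝ) - Real.log (Nat.sqrt B : ℝ)) atTop (nhds 0) := by
  apply tendsto_of_tendsto_of_tendsto_of_le_of_le'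
    (g := fun B : ℕ => -2*(Real.log ((Nat.sqrt (Nat.sqrt B) : ℝ)+1)
        - Real.log (Nat.sqrt (Nat.sqrt B) : ℝ)))
    (h := fun _ => (0:ℝ))
  · have h0 : Tendsto (fun n : ℕ => Real.log ((n:ℝ)+1) - Real.log n) atTop (nhds 0) :=
      tendsto_log_succ_sub.comp tendsto_natCast_atTop_atTop
    have := (h0.comp (tendsto_nat_sqrt.comp tendsto_nat_sqrt)).const_mul (-2)
    simpa using this
  · exact tendsto_const_nhds
  · filter_upwards [eventually_ge_atTop 1] with B hB
    obtain ⟨hK1, hM1, -, -, -, -, hKM2, hMK2⟩ := size_facts hB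
    set M := Nat.sqrt B
    set K := Nat.sqrt M
    have hK0 : (0:ℝ) < K := by exact_mod_cast hK1
    have hM0 : (0:ℝ) < M := by exact_mod_cast hM1
    have hMle : (M:ℝ) ≤ ((K:ℝ)+1)^2 := by
      have : (M:ℝ) < (((K+1):ℕ):ℝ)^2 := by exact_mod_cast (by exact_mod_cast hMK2 : (M:ℝ) < ((K+1)^2 : ℕ))
      push_cast at this
      linarith
    have hlog : Real.log (M:ℝ) ≤ 2*Real.log ((K:ℝ)+1) := by
      calc Real.log (M:ℝ) ≤ Real.log (((K:ℝ)+1)^2) := Real.log_le_log hM0 hMle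
        _ = 2*Real.log ((K:ℝ)+1) := by rw [show (((K:ℝ)+1)^2) = ((K:ℝ)+1)^(2:ℕ) by norm_num, Real.log_pow]; push_cast; ring
    linarith
  · filter_upwards [eventually_ge_atTop 1] with B hB
    obtain ⟨hK1, hM1, -, -, -, -, hKM2, -⟩ := size_facts hB
    set M := Nat.sqrt B
    set K := Nat.sqrt M
    have hK0 : (0:ℝ) < K := by exact_mod_cast hK1
    have hKle : ((K:ℝ))^2 ≤ (M:ℝ) := by exact_mod_cast hKM2
    have hlog : 2*Real.log (K:ℝ) ≤ Real.log (M:ℝ) := by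
      calc 2*Real.log (K:ℝ) = Real.log ((K:ℝ)^(2:ℕ)) := by rw [Real.log_pow]; push_cast; ring
        _ ≤ Real.log (M:ℝ) := Real.log_le_log (by positivity) hKle
    linarith

lemma Hpart_tendsto : Tendsto (fun B : ℕ =>
    2 * Hn (Nat.sqrt (Nat.sqrt B)) - Hn (Nat.sqrt B)) atTop
    (nhds Real.eulerMascheroniConstant) := by
  have h1 : Tendsto (fun B : ℕ => Hn (Nat.sqrt (Nat.sqrt B)) - Real.log (Nat.sqrt (Nat.sqrt B) : ℝ))
      atTop (nhds Real.eulerMascheroniConstant) :=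
    tendsto_harmonic_real.comp (tendsto_nat_sqrt.comp tendsto_nat_sqrt)
  have h2 : Tendsto (fun B : ℕ => Hn (Nat.sqrt B) - Real.log (Nat.sqrt B : ℝ))
      atTop (nhds Real.eulerMascheroniConstant) :=
    tendsto_harmonic_real.comp tendsto_nat_sqrt
  have h := ((h1.const_mul 2).sub h2).add logpart_tendsto
  have heq : ∀ B : ℕ, (2*(Hn (Nat.sqrt (Nat.sqrt B)) - Real.log (Nat.sqrt (Nat.sqrt B) : ℝ))
      - (Hn (Nat.sqrt B) - Real.log (Nat.sqrt B : ℝ)))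
      + (2*Real.log (Nat.sqrt (Nat.sqrt B) : ℝ) - Real.log (Nat.sqrt B : ℝ))
      = 2 * Hn (Nat.sqrt (Nat.sqrt B)) - Hn (Nat.sqrt B) := by
    intro B; ring
  have hval : (2*Real.eulerMascheroniConstant - Real.eulerMascheroniConstant) + 0
      = Real.eulerMascheroniConstant := by ring
  rw [← hval]
  exact h.congr heq

lemma F12_tendsto : Tendsto (fun B : ℕ =>
    (∑ d ∈ Finset.Ioc 0 (Nat.sqrt (Nat.sqrt B)), ((B/d : ℕ):ℝ))/(B:ℝ)
      - (∑ d ∈ Finset.Ioc (Nat.sqrt (Nat.sqrt B)) (Nat.sqrt B), ((B/d : ℕ):ℝ))/(B:ℝ))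
    atTop (nhds Real.eulerMascheroniConstant) := by
  have h := (errA_tendsto.sub errB_tendsto).add Hpart_tendsto
  have heq : ∀ B : ℕ,
      ((∑ d ∈ Finset.Ioc 0 (Nat.sqrt (Nat.sqrt B)), ((B/d : ℕ):ℝ))/(B:ℝ) - Hn (Nat.sqrt (Nat.sqrt B))
        - ((∑ d ∈ Finset.Ioc (Nat.sqrt (Nat.sqrt B)) (Nat.sqrt B), ((B/d : ℕ):ℝ))/(B:ℝ)
            - (Hn (Nat.sqrt B) - Hn (Nat.sqrt (Nat.sqrt B)))))
      + (2 * Hn (Nat.sqrt (Nat.sqrt B)) - Hn (Nat.sqrt B))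
      = (∑ d ∈ Finset.Ioc 0 (Nat.sqrt (Nat.sqrt B)), ((B/d : ℕ):ℝ))/(B:ℝ)
        - (∑ d ∈ Finset.Ioc (Nat.sqrt (Nat.sqrt B)) (Nat.sqrt B), ((B/d : ℕ):ℝ))/(B:ℝ) := by
    intro B; ring
  have hval : ((0:ℝ) - 0) + Real.eulerMascheroniConstant = Real.eulerMascheroniConstant := by ring
  rw [← hval]
  exact h.congr heq

-- rational-function limits
lemma aux_inv : Tendsto (fun n : ℕ => 1/((n:ℝ))) atTop (nhds 0) := tendsto_one_div_nat

lemma auxK1 : Tendsto (fun n : ℕ => -2*(((n:ℝ)*((n:ℝ)+1)/2)^2)/(n:ℝ)^4) atTop (nhds (-(1:ℝ)/2)) := by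
  have base : Tendsto (fun n : ℕ => -((1 + 1/(n:ℝ))^2)/2) atTop (nhds (-(1:ℝ)/2)) := by
    have h1 : Tendsto (fun n : ℕ => 1 + 1/(n:ℝ)) atTop (nhds 1) := by
      simpa using (tendsto_const_nhds (x := (1:ℝ)) (f := atTop)).add aux_inv
    have := ((h1.pow 2).neg).div_const 2
    simpa using this
  apply base.congr'
  filter_upwards [eventually_ge_atTop 1] with n hn
  have hn0 : (0:ℝ) < n := by exact_mod_cast hn
  field_simp

lemma auxK2 : Tendsto (fun n : ℕ =>
    -2*(((n:ℝ)*((n:ℝ)+1)/2)^2)/(((n:ℝ)+1)^4) + ((n:ℝ)*((n:ℝ)+1)/2 + (n:ℝ))/(n:ℝ)^4)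
    atTop (nhds (-(1:ℝ)/2)) := by
  have h1 : Tendsto (fun n : ℕ => 1 + 1/(n:ℝ)) atTop (nhds 1) := by
    simpa using (tendsto_const_nhds (x := (1:ℝ)) (f := atTop)).add aux_inv
  have base : Tendsto (fun n : ℕ =>
      -(1/(1 + 1/(n:ℝ))^2)/2 + ((1/(n:ℝ))^2*(1 + 1/(n:ℝ))/2 + (1/(n:ℝ))^3)) atTop
      (nhds (-(1:ℝ)/2)) := by
    have hA : Tendsto (fun n : ℕ => -(1/(1 + 1/(n:ℝ))^2)/2) atTop (nhds (-(1:ℝ)/2)) := by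
      have h2 := (h1.pow 2)
      have h3 : Tendsto (fun n : ℕ => 1/(1 + 1/(n:ℝ))^2) atTop (nhds 1) := by
        have := h2.inv₀ (by norm_num)
        simpa [one_div] using this
      have := (h3.neg).div_const 2
      simpa using this
    have hB : Tendsto (fun n : ℕ => (1/(n:ℝ))^2*(1 + 1/(n:ℝ))/2 + (1/(n:ℝ))^3) atTop (nhds 0) := by
      have := (((aux_inv.pow 2).mul h1).div_const 2).add (aux_inv.pow 3)
      simpa using this
    have := hA.add hB
    simpa using this
  apply base.congr'
  filter_upwards [eventually_ge_atTop 1] with n hn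
  have hn0 : (0:ℝ) < n := by exact_mod_cast hn
  have hn1 : (0:ℝ) < (n:ℝ) + 1 := by positivity
  field_simp

lemma auxM1 : Tendsto (fun n : ℕ => ((n:ℝ)*((n:ℝ)+1)/2)/(n:ℝ)^2) atTop (nhds ((1:ℝ)/2)) := by
  have h1 : Tendsto (fun n : ℕ => 1 + 1/(n:ℝ)) atTop (nhds 1) := by
    simpa using (tendsto_const_nhds (x := (1:ℝ)) (f := atTop)).add aux_inv
  have base := h1.div_const 2
  apply (by simpa using base : Tendsto (fun n : ℕ => (1 + 1/(n:ℝ))/2) atTop (nhds ((1:ℝ)/2))).congr'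
  filter_upwards [eventually_ge_atTop 1] with n hn
  have hn0 : (0:ℝ) < n := by exact_mod_cast hn
  field_simp

lemma auxM2 : Tendsto (fun n : ℕ => ((n:ℝ)*((n:ℝ)+1)/2)/(((n:ℝ)+1)^2)) atTop (nhds ((1:ℝ)/2)) := by
  have h1 : Tendsto (fun n : ℕ => 1 + 1/(n:ℝ)) atTop (nhds 1) := by
    simpa using (tendsto_const_nhds (x := (1:ℝ)) (f := atTop)).add aux_inv
  have h3 : Tendsto (fun n : ℕ => 1/(1 + 1/(n:ℝ))) atTop (nhds 1) := by
    have := h1.inv₀ (by norm_num)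
    simpa [one_div] using this
  have base := h3.div_const 2
  apply (by simpa using base : Tendsto (fun n : ℕ => (1/(1 + 1/(n:ℝ)))/2) atTop (nhds ((1:ℝ)/2))).congr'
  filter_upwards [eventually_ge_atTop 1] with n hn
  have hn0 : (0:ℝ) < n := by exact_mod_cast hn
  have hn1 : (0:ℝ) < (n:ℝ) + 1 := by positivity
  field_simp

lemma auxK3 : Tendsto (fun n : ℕ => ((n:ℝ)*((n:ℝ)+1)/2)/(n:ℝ)^4) atTop (nhds 0) := by
  have h1 : Tendsto (fun n : ℕ => 1 + 1/(n:ℝ)) atTop (nhds 1) := by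
    simpa using (tendsto_const_nhds (x := (1:ℝ)) (f := atTop)).add aux_inv
  have base : Tendsto (fun n : ℕ => (1/(n:ℝ))^2*(1 + 1/(n:ℝ))/2) atTop (nhds 0) := by
    have := ((aux_inv.pow 2).mul h1).div_const 2
    simpa using this
  apply base.congr'
  filter_upwards [eventually_ge_atTop 1] with n hn
  have hn0 : (0:ℝ) < n := by exact_mod_cast hn
  field_simp

lemma sum_poly (n : ℕ) : ∑ d ∈ Finset.Ioc 0 n, (-2*(d:ℝ)^3 + (d:ℝ) + 1)
    = -2*(((n:ℝ)*((n:ℝ)+1)/2)^2) + ((n:ℝ)*((n:ℝ)+1)/2) + n := by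
  induction n with
  | zero => simp
  | succ n ih =>
    rw [Finset.sum_Ioc_succ_top (Nat.zero_le _), ih]
    push_cast
    ring

lemma F3_tendsto : Tendsto (fun B : ℕ =>
    (∑ d ∈ Finset.Ioc 0 (Nat.sqrt (Nat.sqrt B)), (-2*(d:ℝ)^3 + (d:ℝ) + 1))/(B:ℝ))
    atTop (nhds (-(1:ℝ)/2)) := by
  apply tendsto_of_tendsto_of_tendsto_of_le_of_le'
    (g := (fun n : ℕ => -2*(((n:ℝ)*((n:ℝ)+1)/2)^2)/(n:ℝ)^4) ∘ (fun B => Nat.sqrt (Nat.sqrt B)))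
    (h := (fun n : ℕ => -2*(((n:ℝ)*((n:ℝ)+1)/2)^2)/(((n:ℝ)+1)^4)
        + ((n:ℝ)*((n:ℝ)+1)/2 + (n:ℝ))/(n:ℝ)^4) ∘ (fun B => Nat.sqrt (Nat.sqrt B)))
  · exact auxK1.comp (tendsto_nat_sqrt.comp tendsto_nat_sqrt)
  · exact auxK2.comp (tendsto_nat_sqrt.comp tendsto_nat_sqrt)
  · filter_upwards [eventually_ge_atTop 1] with B hB
    obtain ⟨hK1, hM1, hK4, hK4', -, -, -, -⟩ := size_facts hB
    set K := Nat.sqrt (Nat.sqrt B) with hKdef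
    have hB0 : (0:ℝ) < B := by exact_mod_cast hB
    have hk0 : (0:ℝ) < K := by exact_mod_cast hK1
    have hk4 : ((K:ℝ))^4 ≤ B := by exact_mod_cast hK4
    rw [Function.comp_apply, sum_poly]
    set k : ℝ := (K:ℝ)
    set S : ℝ := (k*(k+1)/2)^2 with hS
    set L : ℝ := k*(k+1)/2 + k with hL
    have hS0 : 0 ≤ S := by positivity
    have hL0 : 0 ≤ L := by positivity
    have hk40 : (0:ℝ) < k^4 := by positivity
    show -2*S/k^4 ≤ (-2*S + k*(k+1)/2 + k)/B
    have step : (-2*S + k*(k+1)/2 + k)/B = (-2*S + L)/B := by rw [hL]; ring_nf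
    rw [step, div_le_div_iff₀ hk40 hB0]
    nlinarith [mul_nonneg (mul_nonneg (by norm_num : (0:ℝ) ≤ 2) hS0) (sub_nonneg.2 hk4), mul_nonneg hL0 hk40.le]
  · filter_upwards [eventually_ge_atTop 1] with B hB
    obtain ⟨hK1, hM1, hK4, hK4', -, -, -, -⟩ := size_facts hB
    set K := Nat.sqrt (Nat.sqrt B) with hKdef
    have hB0 : (0:ℝ) < B := by exact_mod_cast hB
    have hk0 : (0:ℝ) < K := by exact_mod_cast hK1
    have hk4 : ((K:ℝ))^4 ≤ B := by exact_mod_cast hK4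
    have hk4' : (B:ℝ) < ((K:ℝ)+1)^4 := by
      have : (B:ℝ) < (((K+1):ℕ):ℝ)^4 := by exact_mod_cast hK4'
      push_cast at this
      linarith
    rw [Function.comp_apply, sum_poly]
    set k : ℝ := (K:ℝ)
    set S : ℝ := (k*(k+1)/2)^2 with hS
    set L : ℝ := k*(k+1)/2 + k with hL
    have hS0 : 0 ≤ S := by positivity
    have hL0 : 0 ≤ L := by positivity
    have hk40 : (0:ℝ) < k^4 := by positivity
    have hk140 : (0:ℝ) < (k+1)^4 := by positivity
    show (-2*S + k*(k+1)/2 + k)/B ≤ -2*S/(k+1)^4 + L/k^4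
    have step : (-2*S + k*(k+1)/2 + k)/B = (-2*S)/B + L/B := by rw [hL]; ring
    rw [step]
    have e1 : (-2*S)/B ≤ (-2*S)/(k+1)^4 := by
      rw [div_le_div_iff₀ hB0 hk140]
      nlinarith [mul_nonneg (mul_nonneg (by norm_num : (0:ℝ) ≤ 2) hS0) (sub_nonneg.2 hk4'.le)]
    have e2 : L/B ≤ L/k^4 := by
      rw [div_le_div_iff₀ hB0 hk40]
      nlinarith [mul_nonneg hL0 (sub_nonneg.2 hk4)]
    linarith

lemma F4_tendsto : Tendsto (fun B : ℕ =>
    (∑ d ∈ Finset.Ioc (Nat.sqrt (Nat.sqrt B)) (Nat.sqrt B), (d:ℝ))/(B:ℝ))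
    atTop (nhds ((1:ℝ)/2)) := by
  apply tendsto_of_tendsto_of_tendsto_of_le_of_le'
    (g := fun B : ℕ => ((Nat.sqrt B : ℝ)*((Nat.sqrt B : ℝ)+1)/2)/(((Nat.sqrt B : ℝ)+1)^2)
        - ((Nat.sqrt (Nat.sqrt B) : ℝ)*((Nat.sqrt (Nat.sqrt B) : ℝ)+1)/2)/((Nat.sqrt (Nat.sqrt B) : ℝ))^4)
    (h := fun B : ℕ => ((Nat.sqrt B : ℝ)*((Nat.sqrt B : ℝ)+1)/2)/((Nat.sqrt B : ℝ))^2)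
  · have := (auxM2.comp tendsto_nat_sqrt).sub (auxK3.comp (tendsto_nat_sqrt.comp tendsto_nat_sqrt))
    simpa using this
  · simpa [Function.comp_def] using auxM1.comp tendsto_nat_sqrt
  · filter_upwards [eventually_ge_atTop 1] with B hB
    obtain ⟨hK1, hM1, hK4, -, hM2, hM2', hKM2, -⟩ := size_facts hB
    set M := Nat.sqrt B
    set K := Nat.sqrt M
    have hKM : K ≤ M := Nat.sqrt_le_self M
    have hB0 : (0:ℝ) < B := by exact_mod_cast hB
    have hk0 : (0:ℝ) < K := by exact_mod_cast hK1
    have hm0 : (0:ℝ) < M := by exact_mod_cast hM1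
    have hk4 : ((K:ℝ))^4 ≤ B := by exact_mod_cast hK4
    have hm2' : (B:ℝ) < ((M:ℝ)+1)^2 := by
      have : (B:ℝ) < (((M+1):ℕ):ℝ)^2 := by exact_mod_cast hM2'
      push_cast at this
      linarith
    have hsum : ∑ d ∈ Finset.Ioc K M, (d:ℝ)
        = (M:ℝ)*((M:ℝ)+1)/2 - (K:ℝ)*((K:ℝ)+1)/2 := by
      have := Finset.sum_Ioc_consecutive (fun d : ℕ => (d:ℝ)) (Nat.zero_le K) hKM
      rw [sum_id_Ioc, sum_id_Ioc] at this
      push_cast at this ⊢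
      linarith
    rw [hsum]
    set k : ℝ := (K:ℝ)
    set m : ℝ := (M:ℝ)
    have hSm0 : (0:ℝ) ≤ m*(m+1)/2 := by positivity
    have hSk0 : (0:ℝ) ≤ k*(k+1)/2 := by positivity
    have e1 : (m*(m+1)/2)/((m+1)^2) ≤ (m*(m+1)/2)/B := by
      rw [div_le_div_iff₀ (by positivity) hB0]
      nlinarith [mul_nonneg hSm0 (sub_nonneg.2 hm2'.le)]
    have e2 : (k*(k+1)/2)/B ≤ (k*(k+1)/2)/k^4 := by
      rw [div_le_div_iff₀ hB0 (by positivity)]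
      nlinarith [mul_nonneg hSk0 (sub_nonneg.2 hk4)]
    have : (m*(m+1)/2 - k*(k+1)/2)/B = (m*(m+1)/2)/B - (k*(k+1)/2)/B := by ring
    rw [this]
    linarith
  · filter_upwards [eventually_ge_atTop 1] with B hB
    obtain ⟨hK1, hM1, hK4, -, hM2, -, -, -⟩ := size_facts hB
    set M := Nat.sqrt B
    set K := Nat.sqrt M
    have hKM : K ≤ M := Nat.sqrt_le_self M
    have hB0 : (0:ℝ) < B := by exact_mod_cast hB
    have hk0 : (0:ℝ) < K := by exact_mod_cast hK1
    have hm0 : (0:ℝ) < M := by exact_mod_cast hM1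
    have hm2 : ((M:ℝ))^2 ≤ B := by exact_mod_cast hM2
    have hsum : ∑ d ∈ Finset.Ioc K M, (d:ℝ)
        = (M:ℝ)*((M:ℝ)+1)/2 - (K:ℝ)*((K:ℝ)+1)/2 := by
      have := Finset.sum_Ioc_consecutive (fun d : ℕ => (d:ℝ)) (Nat.zero_le K) hKM
      rw [sum_id_Ioc, sum_id_Ioc] at this
      push_cast at this ⊢
      linarith
    rw [hsum]
    set k : ℝ := (K:ℝ)
    set m : ℝ := (M:ℝ)
    have hSm0 : (0:ℝ) ≤ m*(m+1)/2 := by positivity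
    have hSk0 : (0:ℝ) ≤ k*(k+1)/2 := by positivity
    have e1 : (m*(m+1)/2 - k*(k+1)/2)/B ≤ (m*(m+1)/2)/B := by
      rw [div_le_div_iff₀ hB0 hB0]
      nlinarith [mul_nonneg hSk0 hB0.le]
    have e2 : (m*(m+1)/2)/B ≤ (m*(m+1)/2)/m^2 := by
      rw [div_le_div_iff₀ hB0 (by positivity)]
      nlinarith [mul_nonneg hSm0 (sub_nonneg.2 hm2)]
    linarith

lemma card_as_sum (s : Finset ℕ) (p : ℕ → Prop) [DecidablePred p] :
    (((s.filter p).card : ℕ) : ℝ) = ∑ x ∈ s, if p x then (1:ℝ) else 0 := by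
  rw [Finset.card_filter]
  push_cast
  apply Finset.sum_congr rfl
  intro x _
  split <;> norm_num

lemma g_tendsto : Tendsto (fun B : ℕ => (1/(B:ℝ)) *
    ((∑ d ∈ Finset.Ioc 0 (Nat.sqrt (Nat.sqrt B)), (((B/d : ℕ) : ℝ) - 2*(d:ℝ)^3 + d + 1)) - 1
      + ∑ d ∈ Finset.Ioc (Nat.sqrt (Nat.sqrt B)) (Nat.sqrt B), ((d:ℝ) - ((B/d : ℕ):ℝ))))
    atTop (nhds Real.eulerMascheroniConstant) := by
  have hF5 : Tendsto (fun B : ℕ => -(1:ℝ)/(B:ℝ)) atTop (nhds 0) := by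
    have := tendsto_one_div_nat.neg
    simpa [neg_div] using this
  have h := ((F12_tendsto.add F3_tendsto).add F4_tendsto).add hF5
  have hval : Real.eulerMascheroniConstant + (-(1:ℝ)/2) + (1:ℝ)/2 + 0
      = Real.eulerMascheroniConstant := by ring
  rw [← hval]
  apply h.congr
  intro B
  have split1 : ∑ d ∈ Finset.Ioc 0 (Nat.sqrt (Nat.sqrt B)), (((B/d : ℕ) : ℝ) - 2*(d:ℝ)^3 + d + 1)
      = (∑ d ∈ Finset.Ioc 0 (Nat.sqrt (Nat.sqrt B)), ((B/d : ℕ) : ℝ))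
        + ∑ d ∈ Finset.Ioc 0 (Nat.sqrt (Nat.sqrt B)), (-2*(d:ℝ)^3 + (d:ℝ) + 1) := by
    rw [← Finset.sum_add_distrib]
    apply Finset.sum_congr rfl
    intros; ring
  have split2 : ∑ d ∈ Finset.Ioc (Nat.sqrt (Nat.sqrt B)) (Nat.sqrt B), ((d:ℝ) - ((B/d : ℕ):ℝ))
      = (∑ d ∈ Finset.Ioc (Nat.sqrt (Nat.sqrt B)) (Nat.sqrt B), (d:ℝ))
        - ∑ d ∈ Finset.Ioc (Nat.sqrt (Nat.sqrt B)) (Nat.sqrt B), ((B/d : ℕ):ℝ) :=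
    Finset.sum_sub_distrib _ _
  rw [split1, split2]
  ring

theorem avg_fourth_root_divisor_count_tendsto_gamma :
    Tendsto (fun B : ℕ => (1 / (B : ℝ)) *
        ∑ q ∈ Finset.Icc 1 B,
          (((q.divisors.filter fun (d : ℕ) => (d : ℝ) < (q : ℝ) ^ ((1 : ℝ) / 4)).card : ℝ) -
           ((q.divisors.filter fun (d : ℕ) =>
              (q : ℝ) ^ ((1 : ℝ) / 4) < (d : ℝ) ∧ (d : ℝ) < (q : ℝ) ^ ((1 : ℝ) / 2)).card : ℝ)))
      atTop (nhds Real.eulerMascheroniConstant) := by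
  apply g_tendsto.congr'
  filter_upwards [eventually_ge_atTop 1] with B hB
  congr 1
  rw [← sum_identity hB]
  have hterm : ∀ q ∈ Finset.Icc 1 B,
      ((((Finset.Icc 1 B).filter (fun d => d ∣ q ∧ d^4 < q)).card : ℝ)
        - (((Finset.Icc 1 B).filter (fun d => d ∣ q ∧ d^2 < q ∧ q < d^4)).card : ℝ))
      = (((q.divisors.filter fun (d : ℕ) => (d : ℝ) < (q : ℝ) ^ ((1 : ℝ) / 4)).card : ℝ) -
         ((q.divisors.filter fun (d : ℕ) =>
            (q : ℝ) ^ ((1 : ℝ) / 4) < (d : ℝ) ∧ (d : ℝ) < (q : ℝ) ^ ((1 : ℝ) / 2)).card : ℝ)) := by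
    intro q hq
    rw [filt1 hq, filt2 hq]
  rw [← Finset.sum_congr rfl hterm]
  simp only [card_as_sum]
  simp only [← Finset.sum_sub_distrib]
  exact Finset.sum_comm
end

section
/- For each positive integer k, setting α_k = e^{γ − (1 + 1/2 + ⋯ + 1/k)}, one has α_k ∈ (0,1) and A(α_k) = γ, where A(α) = ∑_{i=1}^{⌈(1−α)/α⌉} 1/i − ln(1/α). In particular A takes the value γ for infinitely many α ∈ (0,1). -/
open Real Finset

private lemma hsum_eq (k : ℕ) : (∑ i ∈ Finset.Icc 1 k, (1 : ℝ) / i) = (harmonic k : ℝ) := by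
  rw [harmonic_eq_sum_Icc]
  push_cast
  simp [one_div]

private lemma key (k : ℕ) (hk : 0 < k) :
    Real.exp (Real.eulerMascheroniConstant - ∑ i ∈ Finset.Icc 1 k, (1 : ℝ) / i)
        ∈ Set.Ioo (0 : ℝ) 1 ∧
      (letI α := Real.exp (Real.eulerMascheroniConstant - ∑ i ∈ Finset.Icc 1 k, (1 : ℝ) / i)
       (∑ i ∈ Finset.Icc 1 ⌈(1 - α) / α⌉₊, (1 : ℝ) / i) - Real.log (1 / α) =
        Real.eulerMascheroniConstant) := by
  set H : ℝ := ∑ i ∈ Finset.Icc 1 k, (1 : ℝ) / i with hH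
  set γ := Real.eulerMascheroniConstant
  have h1 : γ < H - Real.log k := by
    have := Real.eulerMascheroniConstant_lt_eulerMascheroniSeq' k
    rwa [Real.eulerMascheroniSeq', if_neg hk.ne', ← hsum_eq] at this
  have h2 : H - Real.log (k + 1) < γ := by
    have := Real.eulerMascheroniSeq_lt_eulerMascheroniConstant k
    rwa [Real.eulerMascheroniSeq, ← hsum_eq] at this
  set α := Real.exp (γ - H) with hα
  have hαpos : 0 < α := Real.exp_pos _
  have hlogk : Real.log k ≥ 0 := Real.log_natCast_nonneg k
  have hα1 : α < 1 := by
    rw [hα, Real.exp_lt_one_iff]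
    linarith
  have hupper : α < 1 / k := by
    rw [hα, show (1:ℝ)/k = Real.exp (Real.log (1/k)) from
      (Real.exp_log (by positivity)).symm, Real.exp_lt_exp]
    rw [Real.log_div one_ne_zero (by exact_mod_cast hk.ne'), Real.log_one]
    linarith
  have hlower : 1 / (k + 1) < α := by
    rw [hα, show (1:ℝ)/(k+1) = Real.exp (Real.log (1/(k+1))) from
      (Real.exp_log (by positivity)).symm, Real.exp_lt_exp]
    rw [Real.log_div one_ne_zero (by positivity), Real.log_one]
    linarith
  have hk1 : (1:ℝ) ≤ k := by exact_mod_cast hk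
  have hA : (k:ℝ) < 1 / α := by
    have := one_div_lt_one_div_of_lt hαpos hupper
    rwa [one_div_one_div] at this
  have hB : 1 / α < (k:ℝ) + 1 := by
    have := one_div_lt_one_div_of_lt (by positivity) hlower
    rwa [one_div_one_div] at this
  have hceil : ⌈(1 - α) / α⌉₊ = k := by
    rw [Nat.ceil_eq_iff hk.ne']
    have heq : (1 - α) / α = 1 / α - 1 := by field_simp
    rw [heq]
    push_cast [Nat.cast_sub hk]
    constructor <;> linarith
  refine ⟨⟨hαpos, hα1⟩, ?_⟩
  simp only [hceil]
  rw [one_div, Real.log_inv, hα, Real.log_exp]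
  ring

theorem A_eq_gamma_for_special_alpha :
    (∀ k : ℕ, 0 < k →
      Real.exp (Real.eulerMascheroniConstant - ∑ i ∈ Finset.Icc 1 k, (1 : ℝ) / i)
        ∈ Set.Ioo (0 : ℝ) 1 ∧
      (letI α := Real.exp (Real.eulerMascheroniConstant - ∑ i ∈ Finset.Icc 1 k, (1 : ℝ) / i)
       (∑ i ∈ Finset.Icc 1 ⌈(1 - α) / α⌉₊, (1 : ℝ) / i) - Real.log (1 / α) =
        Real.eulerMascheroniConstant)) ∧
    {α : ℝ | α ∈ Set.Ioo (0 : ℝ) 1 ∧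
        (∑ i ∈ Finset.Icc 1 ⌈(1 - α) / α⌉₊, (1 : ℝ) / i) - Real.log (1 / α) =
          Real.eulerMascheroniConstant}.Infinite := by
  refine ⟨fun k hk => key k hk, ?_⟩
  apply Set.infinite_of_injective_forall_mem
    (f := fun n : ℕ => Real.exp (Real.eulerMascheroniConstant -
      ∑ i ∈ Finset.Icc 1 (n+1), (1 : ℝ) / i))
  case hi =>
    intro a b hab
    simp only [Real.exp_eq_exp, sub_right_injective.eq_iff] at hab
    have : ((harmonic (a+1) : ℝ)) = harmonic (b+1) := by
      rw [← hsum_eq, ← hsum_eq, hab]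
    have h2 : harmonic (a+1) = harmonic (b+1) := by exact_mod_cast this
    have hmono : StrictMono harmonic := by
      intro a b hab
      induction b with
      | zero => omega
      | succ n ih =>
        have hpos : (0:ℚ) < (↑(n+1))⁻¹ := by positivity
        rcases Nat.lt_succ_iff_lt_or_eq.1 hab with h | h
        · have := ih h; rw [harmonic_succ]; linarith
        · subst h; rw [harmonic_succ]; linarith
    have := hmono.injective h2
    omega
  case hf =>
    intro n
    obtain ⟨h1, h2⟩ := key (n+1) n.succ_pos
    exact ⟨h1, h2⟩
end

section
/- The integral over α ∈ (0,1) of A(α) = ∑_{i=1}^{⌈(1−α)/α⌉} 1/i − ln(1/α) equals ζ(2) − 1 = π²/6 − 1. -/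
open MeasureTheory

section Aux

open Set Real Filter Topology intervalIntegral

lemma integrableOn_log_Ioc01 : IntegrableOn Real.log (Set.Ioc (0:ℝ) 1) := by
  apply integrableOn_Ioc_of_intervalIntegral_norm_bounded_left (I := 1)
    (a := fun n : ℕ => 1/(n+1)) (l := atTop)
  · intro n
    exact (intervalIntegrable_log (notMem_uIcc_of_lt (by positivity) one_pos)).1
  · exact tendsto_one_div_add_atTop_nhds_zero_nat
  · filter_upwards with n
    set ε : ℝ := 1/(n+1) with hε
    have hε0 : 0 < ε := by positivity
    have hε1 : ε ≤ 1 := by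
      rw [hε, div_le_one (by positivity)]
      linarith [Nat.cast_nonneg (α := ℝ) n]
    rw [← intervalIntegral.integral_of_le hε1]
    have hcongr : Set.EqOn (fun x => ‖Real.log x‖) (fun x => -Real.log x) (Set.uIcc ε 1) := by
      intro x hx
      rw [Set.uIcc_of_le hε1] at hx
      simp only [Real.norm_eq_abs]
      exact abs_of_nonpos (Real.log_nonpos (le_of_lt (lt_of_lt_of_le hε0 hx.1)) hx.2)
    rw [intervalIntegral.integral_congr hcongr, intervalIntegral.integral_neg,
      integral_log]
    have hlog : Real.log ε ≤ 0 := Real.log_nonpos hε0.le hε1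
    have h2 : ε * Real.log ε ≤ 0 := mul_nonpos_of_nonneg_of_nonpos hε0.le hlog
    simp only [Real.log_one]
    nlinarith

lemma integral_log_Ioc01 : ∫ x in Set.Ioc (0:ℝ) 1, Real.log x = -1 := by
  have hInt : IntegrableOn Real.log (Set.uIcc (0:ℝ) 1) := by
    rw [Set.uIcc_of_le zero_le_one, integrableOn_Icc_iff_integrableOn_Ioc]
    exact integrableOn_log_Ioc01
  have hcont := continuousOn_primitive_interval_left (f := Real.log)
    (μ := volume) (a := 0) (b := 1) hInt
  set F : ℝ → ℝ := fun u => ∫ t in u..1, Real.log t with hF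
  have h0 : (0:ℝ) ∈ Set.uIcc 0 1 := Set.left_mem_uIcc
  have hl : Filter.NeBot (𝓝[Set.Ioc (0:ℝ) 1] 0) := left_nhdsWithin_Ioc_neBot one_pos
  have ht1 : Tendsto F (𝓝[Set.Ioc (0:ℝ) 1] 0) (𝓝 (F 0)) := by
    refine (hcont 0 h0).mono_left (nhdsWithin_mono 0 ?_)
    rw [Set.uIcc_of_le zero_le_one]
    exact Set.Ioc_subset_Icc_self
  have ht2 : Tendsto F (𝓝[Set.Ioc (0:ℝ) 1] 0) (𝓝 (-1)) := by
    have hGc : Continuous (fun u : ℝ => u - u * Real.log u - 1) :=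
      (continuous_id.sub continuous_mul_log).sub continuous_const
    have hG : Tendsto (fun u : ℝ => u - u * Real.log u - 1) (𝓝 0) (𝓝 (-1)) := by
      have := hGc.tendsto 0
      simpa using this
    refine (hG.mono_left nhdsWithin_le_nhds).congr' ?_
    filter_upwards [self_mem_nhdsWithin] with u hu
    rw [hF]
    simp only
    rw [integral_log, Real.log_one]
    ring
  have key := tendsto_nhds_unique ht1 ht2
  rw [hF] at key
  simp only at key
  rw [intervalIntegral.integral_of_le zero_le_one] at key
  exact key

lemma integral_log_Ioo01 : ∫ x in Set.Ioo (0:ℝ) 1, Real.log x = -1 := by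
  rw [← MeasureTheory.integral_Ioc_eq_integral_Ioo]
  exact integral_log_Ioc01

noncomputable def ff (i : ℕ) : ℝ → ℝ :=
  (Set.Ioo (0:ℝ) (1/(i+1))).indicator (fun _ => 1/(i+1))

lemma ff_nonneg (i : ℕ) (a : ℝ) : 0 ≤ ff i a :=
  Set.indicator_nonneg (fun _ _ => by positivity) a

lemma ff_pointwise {α : ℝ} (hα : α ∈ Set.Ioo (0:ℝ) 1) :
    (∑' i : ℕ, ff i α) = ∑ i ∈ Finset.Icc 1 ⌈(1 - α) / α⌉₊, (1:ℝ)/i := by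
  obtain ⟨hα0, hα1⟩ := hα
  set N := ⌈(1 - α) / α⌉₊ with hN
  have key : ∀ i : ℕ, ff i α = if i < N then (1:ℝ)/(i+1) else 0 := by
    intro i
    have hiff : α < 1/(i+1) ↔ i < N := by
      rw [hN, Nat.lt_ceil, lt_div_iff₀ (by positivity : (0:ℝ) < (i:ℝ)+1),
        lt_div_iff₀ hα0]
      constructor <;> intro h <;> nlinarith
    rw [ff, Set.indicator_apply]
    by_cases h : i < N
    · rw [if_pos h, if_pos ⟨hα0, hiff.2 h⟩]
    · rw [if_neg h, if_neg (fun hm => h (hiff.1 hm.2))]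
  have hsupp : ∀ i ∉ Finset.range N, ff i α = 0 := by
    intro i hi
    rw [key i, if_neg (by simpa using hi)]
  rw [tsum_eq_sum hsupp]
  rw [Finset.sum_congr rfl (fun i hi => by
    rw [key i, if_pos (Finset.mem_range.1 hi)])]
  rw [← Finset.Ico_add_one_right_eq_Icc, Finset.sum_Ico_eq_sum_range]
  simp only [Nat.add_sub_cancel]
  refine Finset.sum_congr rfl fun i _ => ?_
  push_cast
  rw [add_comm]

lemma integrable_ff (i : ℕ) : Integrable (ff i) (volume.restrict (Set.Ioo (0:ℝ) 1)) := by
  haveI : IsFiniteMeasure (volume.restrict (Set.Ioo (0:ℝ) 1)) := by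
    constructor
    rw [Measure.restrict_apply_univ, Real.volume_Ioo]
    simp
  exact (integrable_const _).indicator measurableSet_Ioo

lemma integral_ff (i : ℕ) :
    ∫ a, ff i a ∂(volume.restrict (Set.Ioo (0:ℝ) 1)) = 1/((i:ℝ)+1)^2 := by
  have h1 : (1:ℝ)/(i+1) ≤ 1 := by
    rw [div_le_one (by positivity)]
    linarith [Nat.cast_nonneg (α := ℝ) i]
  rw [ff, MeasureTheory.integral_indicator measurableSet_Ioo, setIntegral_const,
    measureReal_def, Measure.restrict_apply measurableSet_Ioo,
    Set.inter_eq_self_of_subset_left (Set.Ioo_subset_Ioo le_rfl h1),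
    Real.volume_Ioo]
  rw [sub_zero, ENNReal.toReal_ofReal (by positivity), smul_eq_mul]
  field_simp

lemma hasSum_inv_sq : HasSum (fun i : ℕ => (1:ℝ)/((i:ℝ)+1)^2) (π^2/6) := by
  have h0 : HasSum (fun n : ℕ => (1:ℝ)/(n:ℝ)^2) (π^2/6 + ∑ i ∈ Finset.range 1, (1:ℝ)/(i:ℝ)^2) := by
    simpa using hasSum_zeta_two
  have := (hasSum_nat_add_iff (f := fun n : ℕ => (1:ℝ)/(n:ℝ)^2) 1).2 h0
  refine this.congr_fun fun n => ?_
  push_cast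
  ring_nf

lemma integral_sum_part :
    ∫ α in Set.Ioo (0:ℝ) 1, (∑' i : ℕ, ff i α) = π^2/6 := by
  have hnorm : ∀ i : ℕ, ∫ a, ‖ff i a‖ ∂(volume.restrict (Set.Ioo (0:ℝ) 1)) = 1/((i:ℝ)+1)^2 := by
    intro i
    rw [← integral_ff i]
    refine integral_congr_ae (Filter.Eventually.of_forall fun a => ?_)
    exact Real.norm_of_nonneg (ff_nonneg i a)
  have hsum : Summable fun i : ℕ => ∫ a, ‖ff i a‖ ∂(volume.restrict (Set.Ioo (0:ℝ) 1)) := by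
    refine Summable.congr hasSum_inv_sq.summable fun i => (hnorm i).symm
  rw [← MeasureTheory.integral_tsum_of_summable_integral_norm integrable_ff hsum]
  rw [tsum_congr integral_ff]
  exact hasSum_inv_sq.tsum_eq

lemma measurable_S :
    Measurable (fun α : ℝ => ∑ i ∈ Finset.Icc 1 ⌈(1 - α) / α⌉₊, (1:ℝ)/i) := by
  have h1 : Measurable fun α : ℝ => ⌈(1 - α) / α⌉₊ :=
    ((measurable_const.sub measurable_id).div measurable_id).nat_ceil
  exact (measurable_from_top (f := fun N : ℕ => ∑ i ∈ Finset.Icc 1 N, (1:ℝ)/i)).comp h1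

lemma S_bound {α : ℝ} (hα : α ∈ Set.Ioo (0:ℝ) 1) :
    ‖∑ i ∈ Finset.Icc 1 ⌈(1 - α) / α⌉₊, (1:ℝ)/i‖ ≤ 1 - Real.log α := by
  obtain ⟨hα0, hα1⟩ := hα
  set N := ⌈(1 - α) / α⌉₊ with hN
  have hinv1 : (1:ℝ) ≤ 1/α := by
    rw [le_div_iff₀ hα0]; linarith
  have hSh : ∑ i ∈ Finset.Icc 1 N, (1:ℝ)/i = ((harmonic N : ℚ) : ℝ) := by
    rw [harmonic_eq_sum_Icc]
    push_cast
    exact Finset.sum_congr rfl fun i _ => (one_div _)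
  have hnonneg : 0 ≤ ∑ i ∈ Finset.Icc 1 N, (1:ℝ)/i :=
    Finset.sum_nonneg fun i _ => by positivity
  rw [Real.norm_of_nonneg hnonneg, hSh]
  have hlogN : Real.log N ≤ Real.log (1/α) := by
    rcases Nat.eq_zero_or_pos N with h | h
    · rw [h]
      simp only [Nat.cast_zero, Real.log_zero]
      exact Real.log_nonneg hinv1
    · refine Real.log_le_log (by exact_mod_cast h) ?_
      have := Nat.ceil_lt_add_one (a := (1 - α)/α)
        (div_nonneg (by linarith) hα0.le)
      rw [← hN] at this
      have h2 : (1 - α)/α + 1 = 1/α := by field_simp; ring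
      linarith
  have := harmonic_le_one_add_log N
  rw [Real.log_div one_ne_zero (ne_of_gt hα0), Real.log_one] at hlogN
  linarith

lemma integrable_bound : Integrable (fun α : ℝ => 1 - Real.log α)
    (volume.restrict (Set.Ioo (0:ℝ) 1)) := by
  haveI : IsFiniteMeasure (volume.restrict (Set.Ioo (0:ℝ) 1)) := by
    constructor
    rw [Measure.restrict_apply_univ, Real.volume_Ioo]
    simp
  exact (integrable_const 1).sub (integrableOn_log_Ioc01.mono_set Set.Ioo_subset_Ioc_self)

end Aux

theorem integral_A_eq_zeta_two_sub_one :
    ∫ α in Set.Ioo (0 : ℝ) 1,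
        ((∑ i ∈ Finset.Icc 1 ⌈(1 - α) / α⌉₊, (1 : ℝ) / i) - Real.log (1 / α)) =
      Real.pi ^ 2 / 6 - 1 := by
  have hS : Integrable (fun α : ℝ => ∑ i ∈ Finset.Icc 1 ⌈(1 - α) / α⌉₊, (1:ℝ)/i)
      (volume.restrict (Set.Ioo (0:ℝ) 1)) := by
    refine Integrable.mono' integrable_bound measurable_S.aestronglyMeasurable ?_
    filter_upwards [ae_restrict_mem measurableSet_Ioo] with α hα
    exact S_bound hα
  have hL : Integrable (fun α : ℝ => Real.log (1/α))
      (volume.restrict (Set.Ioo (0:ℝ) 1)) := by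
    have heq : (fun α : ℝ => Real.log (1/α)) = fun α : ℝ => -Real.log α := by
      funext α; rw [one_div, Real.log_inv]
    rw [heq]
    exact (integrableOn_log_Ioc01.mono_set Set.Ioo_subset_Ioc_self).neg
  rw [integral_sub hS hL]
  have h1 : ∫ α in Set.Ioo (0:ℝ) 1, (∑ i ∈ Finset.Icc 1 ⌈(1 - α) / α⌉₊, (1:ℝ)/i)
      = Real.pi^2/6 := by
    rw [← integral_sum_part]
    refine setIntegral_congr_fun measurableSet_Ioo fun α hα => ?_
    exact (ff_pointwise hα).symm
  have h2 : ∫ α in Set.Ioo (0:ℝ) 1, Real.log (1/α) = 1 := by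
    have heq : (fun α : ℝ => Real.log (1/α)) = fun α : ℝ => -Real.log α := by
      funext α; rw [one_div, Real.log_inv]
    rw [heq, integral_neg, integral_log_Ioo01]
    norm_num
  rw [h1, h2]
end
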